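/- arXiv:1703.00591 — 2 statements merged into one kernel-verified Lean document; each statement's English description precedes it below -/
import Mathlib

section
/- Suppose 𝒜 = {A_i}_{i=1}^m ⊂ ℝ^{n×n} is τ_n-block diagonalizable with τ_n-block diagonalizer W, so that Wᵀ A_i W = diag(A_i^{(11)},…,A_i^{(tt)}) with A_i^{(jj)} ∈ ℝ^{n_j×n_j} for all i. Let 𝒜_j = {A_i^{(jj)}}_{i=1}^m, and assume that every 𝒜_j cannot be further block diagonalized. Then 𝒜 is uniquely τ_n-block diagonalizable if and only if for all 1 ≤ j < k ≤ t the matrix M_{jk} = Σ_{i=1}^m [ I_{n_k}⊗((A_i^{(jj)})ᵀA_i^{(jj)} + A_i^{(jj)}(A_i^{(jj)})ᵀ), A_i^{(kk)}⊗A_i^{(jj)} + (A_i^{(kk)})ᵀ⊗(A_i^{(jj)})ᵀ ; A_i^{(kk)}⊗A_i^{(jj)} + (A_i^{(kk)})ᵀ⊗(A_i^{(jj)})ᵀ, ((A_i^{(kk)})ᵀA_i^{(kk)} + A_i^{(kk)}(A_i^{(kk)})ᵀ)⊗I_{n_j} ] is nonsingular. -/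
open Matrix BigOperators Kronecker
open scoped ENNReal

namespace JBD

/-- Index type for `τ_n`-block partitioned `n×n` matrices, where the partition
`τ_n = (n 0, …, n (t-1))`. -/
abbrev BlkIdx {t : ℕ} (n : Fin t → ℕ) := Σ j : Fin t, Fin (n j)

variable {t : ℕ} {n : Fin t → ℕ}

/-- The `τ_n`-block diagonal part `Bdiag_{τ_n}(A)`. -/
def bdiag (A : Matrix (BlkIdx n) (BlkIdx n) ℝ) : Matrix (BlkIdx n) (BlkIdx n) ℝ :=
  fun p q => if p.1 = q.1 then A p q else 0

/-- The `τ_n`-off-block diagonal part `OffBdiag_{τ_n}(A)`. -/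
def offBdiag (A : Matrix (BlkIdx n) (BlkIdx n) ℝ) : Matrix (BlkIdx n) (BlkIdx n) ℝ :=
  A - bdiag A

/-- `A ∈ 𝔻_{τ_n}`, i.e. `A` is `τ_n`-block diagonal. -/
def IsBlockDiag (A : Matrix (BlkIdx n) (BlkIdx n) ℝ) : Prop :=
  ∀ p q : BlkIdx n, p.1 ≠ q.1 → A p q = 0

/-- `P` is a permutation matrix. -/
def IsPermMatrix {I : Type*} [DecidableEq I] [Fintype I] (P : Matrix I I ℝ) : Prop :=
  ∃ σ : Equiv.Perm I, P = σ.permMatrix ℝ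

/-- `P ∈ ℙ_{τ_n}`: a `τ_n`-block diagonal preserving permutation matrix. -/
def IsBDPerm (P : Matrix (BlkIdx n) (BlkIdx n) ℝ) : Prop :=
  IsPermMatrix P ∧
    ∀ D : Matrix (BlkIdx n) (BlkIdx n) ℝ, IsBlockDiag D → IsBlockDiag (Pᵀ * D * P)

/-- `W ∈ 𝕎_{τ_n}`: nonsingular with `Bdiag_{τ_n}(Wᵀ W) = I`. -/
def MemW (W : Matrix (BlkIdx n) (BlkIdx n) ℝ) : Prop :=
  IsUnit W ∧ bdiag (Wᵀ * W) = 1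

/-- `W` is a `τ_n`-block diagonalizer of the matrix set `𝒜 = {A i}`. -/
def IsDiagonalizer {m : ℕ} (A : Fin m → Matrix (BlkIdx n) (BlkIdx n) ℝ)
    (W : Matrix (BlkIdx n) (BlkIdx n) ℝ) : Prop :=
  IsUnit W ∧ ∀ i, IsBlockDiag (Wᵀ * A i * W)

/-- The JBDP for `𝒜` is uniquely `τ_n`-block diagonalizable. -/
def UniquelyBD {m : ℕ} (A : Fin m → Matrix (BlkIdx n) (BlkIdx n) ℝ) : Prop :=
  (∃ W, IsDiagonalizer A W) ∧
    ∀ W W', IsDiagonalizer A W → IsDiagonalizer A W' →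
      ∃ D P : Matrix (BlkIdx n) (BlkIdx n) ℝ,
        IsBlockDiag D ∧ IsUnit D ∧ IsBDPerm P ∧ W' = W * D * P

/-- The `j`-th diagonal block of a `τ_n`-partitioned matrix. -/
def dblock (A : Matrix (BlkIdx n) (BlkIdx n) ℝ) (j : Fin t) :
    Matrix (Fin (n j)) (Fin (n j)) ℝ := fun x y => A ⟨j, x⟩ ⟨j, y⟩

/-- A family `B = {B i}` of `N×N` matrices can be (further) simultaneously block
diagonalized by congruence, with respect to some partition of `N` of cardinality `≥ 2`. -/
def CanSplit {N m : ℕ} (B : Fin m → Matrix (Fin N) (Fin N) ℝ) : Prop :=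
  ∃ (s : ℕ) (k : Fin s → ℕ), 2 ≤ s ∧ (∀ j, 0 < k j) ∧ (∑ j, k j) = N ∧
    ∃ (e : Fin N ≃ BlkIdx k) (V : Matrix (Fin N) (Fin N) ℝ), IsUnit V ∧
      ∀ i, IsBlockDiag (Matrix.reindex e e (Vᵀ * B i * V))

/-- The subspace `𝒩(ℬ) = {Z : B i * Z - Zᵀ * B i = 0 for all i}`. -/
def nSubmodule {m : ℕ} {I : Type*} [Fintype I] (B : Fin m → Matrix I I ℝ) :
    Submodule ℝ (Matrix I I ℝ) where
  carrier := {Z | ∀ i, B i * Z - Zᵀ * B i = 0}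
  add_mem' := by
    intro a b ha hb i
    have h1 := ha i
    have h2 := hb i
    have : (B i * a - aᵀ * B i) + (B i * b - bᵀ * B i) = 0 := by rw [h1, h2, add_zero]
    calc B i * (a + b) - (a + b)ᵀ * B i
        = (B i * a - aᵀ * B i) + (B i * b - bᵀ * B i) := by
          rw [Matrix.mul_add, Matrix.transpose_add, Matrix.add_mul]; abel
      _ = 0 := this
  zero_mem' := by intro i; simp
  smul_mem' := by
    intro c Z hZ i
    have h := hZ i
    calc B i * (c • Z) - (c • Z)ᵀ * B i = c • (B i * Z - Zᵀ * B i) := by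
          rw [Matrix.mul_smul, Matrix.transpose_smul, Matrix.smul_mul, smul_sub]
      _ = 0 := by rw [h, smul_zero]

/-- Frobenius norm. -/
noncomputable def frob {I J : Type*} [Fintype I] [Fintype J] (A : Matrix I J ℝ) : ℝ :=
  Real.sqrt (∑ i, ∑ j, (A i j) ^ 2)

/-- Spectral norm (operator 2-norm). -/
noncomputable def spec {I : Type*} [Fintype I] [DecidableEq I] (A : Matrix I I ℝ) : ℝ :=
  ‖Matrix.toEuclideanCLM (𝕜 := ℝ) A‖

/-- Singular values of a real matrix: square roots of the eigenvalues of `Aᵀ * A`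
(one for each column index). -/
noncomputable def sv {I J : Type*} [Fintype I] [Fintype J] [DecidableEq J]
    (A : Matrix I J ℝ) (k : J) : ℝ :=
  Real.sqrt ((show (Aᵀ * A).IsHermitian by
    simpa using Matrix.isHermitian_conjTranspose_mul_self A).eigenvalues k)

/-- The smallest singular value. -/
noncomputable def sigmaMin {I J : Type*} [Fintype I] [Fintype J] [DecidableEq J]
    (A : Matrix I J ℝ) : ℝ :=
  ⨅ k : J, sv A k

/-- The smallest nonzero singular value. -/
noncomputable def minNonzeroSV {I J : Type*} [Fintype I] [Fintype J] [DecidableEq J]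
    (A : Matrix I J ℝ) : ℝ :=
  sInf {s | (∃ k, sv A k = s) ∧ s ≠ 0}

/-- The list of singular values sorted in increasing order. -/
noncomputable def svSorted {I J : Type*} [Fintype I] [Fintype J] [DecidableEq J]
    (A : Matrix I J ℝ) : List ℝ :=
  (Finset.univ.val.map (sv A)).sort (· ≤ ·)

/-- The second smallest singular value. -/
noncomputable def secondSmallestSV {I J : Type*} [Fintype I] [Fintype J] [DecidableEq J]
    (A : Matrix I J ℝ) : ℝ :=
  (svSorted A).getD 1 0

/-- The matrix `G_{jk}` (for `j < k`), built from the diagonal blocks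
`Aj i = A_i^{(jj)}` (size `a`) and `Ak i = A_i^{(kk)}` (size `b`). -/
noncomputable def Gjk {m a b : ℕ} (Aj : Fin m → Matrix (Fin a) (Fin a) ℝ)
    (Ak : Fin m → Matrix (Fin b) (Fin b) ℝ) :
    Matrix (Fin m × ((Fin b × Fin a) ⊕ (Fin b × Fin a))) ((Fin b × Fin a) ⊕ (Fin b × Fin a)) ℝ :=
  fun r c =>
    Matrix.fromBlocks
      ((1 : Matrix (Fin b) (Fin b) ℝ) ⊗ₖ Aj r.1) ((Ak r.1)ᵀ ⊗ₖ (1 : Matrix (Fin a) (Fin a) ℝ))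
      ((1 : Matrix (Fin b) (Fin b) ℝ) ⊗ₖ (Aj r.1)ᵀ) (Ak r.1 ⊗ₖ (1 : Matrix (Fin a) (Fin a) ℝ))
      r.2 c

/-- Column-major vectorization: `vecM Z (c, r) = Z r c`. -/
def vecM {a b : ℕ} (Z : Matrix (Fin a) (Fin b) ℝ) : Fin b × Fin a → ℝ :=
  fun p => Z p.2 p.1

/-- The perfect-shuffle permutation matrix `Π_j`, satisfying
`shuffle a *ᵥ vecM Zᵀ = vecM Z`. -/
def shuffle (a : ℕ) : Matrix (Fin a × Fin a) (Fin a × Fin a) ℝ :=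
  fun p q => if q = p.swap then 1 else 0

/-- The matrix `G_{jj}`, built from the diagonal blocks `Aj i = A_i^{(jj)}` (size `a`):
its `i`-th block row is `I ⊗ Aj i - ((Aj i)ᵀ ⊗ I) * Π_j`. -/
noncomputable def Gjj {m a : ℕ} (Aj : Fin m → Matrix (Fin a) (Fin a) ℝ) :
    Matrix (Fin m × (Fin a × Fin a)) (Fin a × Fin a) ℝ :=
  fun r c =>
    ((1 : Matrix (Fin a) (Fin a) ℝ) ⊗ₖ Aj r.1
      - ((Aj r.1)ᵀ ⊗ₖ (1 : Matrix (Fin a) (Fin a) ℝ)) * shuffle a) r.2 c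

/-- The matrix `M_{jk}` from Theorem 2.1, `M_{jk} = G_{jk}ᵀ G_{jk}`. -/
noncomputable def Mjk {m a b : ℕ} (Aj : Fin m → Matrix (Fin a) (Fin a) ℝ)
    (Ak : Fin m → Matrix (Fin b) (Fin b) ℝ) :
    Matrix ((Fin b × Fin a) ⊕ (Fin b × Fin a)) ((Fin b × Fin a) ⊕ (Fin b × Fin a)) ℝ :=
  ∑ i, Matrix.fromBlocks
    ((1 : Matrix (Fin b) (Fin b) ℝ) ⊗ₖ ((Aj i)ᵀ * Aj i + Aj i * (Aj i)ᵀ))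
    (Ak i ⊗ₖ Aj i + (Ak i)ᵀ ⊗ₖ (Aj i)ᵀ)
    (Ak i ⊗ₖ Aj i + (Ak i)ᵀ ⊗ₖ (Aj i)ᵀ)
    (((Ak i)ᵀ * Ak i + Ak i * (Ak i)ᵀ) ⊗ₖ (1 : Matrix (Fin a) (Fin a) ℝ))

/-- The modulus of uniqueness `ω_uniq = min_{j<k} σ_min(G_{jk})`, in terms of the
family of diagonal blocks `Ab j i = A_i^{(jj)}`. -/
noncomputable def omegaUniq {m : ℕ}
    (Ab : ∀ j : Fin t, Fin m → Matrix (Fin (n j)) (Fin (n j)) ℝ) : ℝ :=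
  ⨅ p : {p : Fin t × Fin t // p.1 < p.2}, sigmaMin (Gjk (Ab p.1.1) (Ab p.1.2))

/-- The modulus of non-divisibility `ω_rob` (`+∞` when `τ_n = (1,…,1)`), in terms of
the family of diagonal blocks `Ab j i = A_i^{(jj)}`. -/
noncomputable def omegaRob {m : ℕ}
    (Ab : ∀ j : Fin t, Fin m → Matrix (Fin (n j)) (Fin (n j)) ℝ) : ℝ≥0∞ :=
  ⨅ (j : Fin t) (_ : 1 < n j), ENNReal.ofReal (minNonzeroSV (Gjj (Ab j)))

/-- The matrix `Γ = diag(γ_1 I_{n_1}, …, γ_t I_{n_t})`. -/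
def gmat (γ : Fin t → ℝ) : Matrix (BlkIdx n) (BlkIdx n) ℝ :=
  Matrix.diagonal (fun p => γ p.1)

/-- The gap `g = min_{j ≠ k} |γ_j - γ_k|`. -/
noncomputable def gammaGap (γ : Fin t → ℝ) : ℝ :=
  ⨅ p : {p : Fin t × Fin t // p.1 ≠ p.2}, |γ p.1.1 - γ p.1.2|

/-- The multiset of complex eigenvalues (with algebraic multiplicity) of a real
square matrix: the roots of its characteristic polynomial over `ℂ`. -/
noncomputable def eigMultiset {I : Type*} [Fintype I] [DecidableEq I]
    (Z : Matrix I I ℝ) : Multiset ℂ :=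
  (Z.map (Complex.ofReal)).charpoly.roots

/-- The `j`-th block column of `P`, with its `j`-th (diagonal) block replaced by `0`:
the matrix `P̂_j`. -/
def hatColumn (P : Matrix (BlkIdx n) (BlkIdx n) ℝ) (j : Fin t) :
    Matrix (BlkIdx n) (Fin (n j)) ℝ :=
  fun p y => if p.1 = j then 0 else P p ⟨j, y⟩


/-! ### Auxiliary machinery for the proof of Theorem 2.1 -/

section AuxBlocks

variable {t : ℕ} {n : Fin t → ℕ}

/-- The `(j,l)` block of a `τ_n`-partitioned matrix. -/
def blk (M : Matrix (BlkIdx n) (BlkIdx n) ℝ) (j l : Fin t) :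
    Matrix (Fin (n j)) (Fin (n l)) ℝ :=
  Matrix.of fun x y => M ⟨j, x⟩ ⟨l, y⟩

theorem blk_apply (M : Matrix (BlkIdx n) (BlkIdx n) ℝ) (j l : Fin t) (x y) :
    blk M j l x y = M ⟨j, x⟩ ⟨l, y⟩ := rfl

theorem blk_mul (M N : Matrix (BlkIdx n) (BlkIdx n) ℝ) (j l : Fin t) :
    blk (M * N) j l = ∑ c, blk M j c * blk N c l := by
  ext x y
  simp only [blk, Matrix.mul_apply, Matrix.of_apply, Matrix.sum_apply]
  rw [← Finset.univ_sigma_univ, Finset.sum_sigma]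

theorem blk_transpose (M : Matrix (BlkIdx n) (BlkIdx n) ℝ) (j l : Fin t) :
    blk Mᵀ j l = (blk M l j)ᵀ := rfl

theorem blk_add (M N : Matrix (BlkIdx n) (BlkIdx n) ℝ) (j l : Fin t) :
    blk (M + N) j l = blk M j l + blk N j l := rfl

theorem blk_smul (c : ℝ) (M : Matrix (BlkIdx n) (BlkIdx n) ℝ) (j l : Fin t) :
    blk (c • M) j l = c • blk M j l := rfl

theorem blk_zero (j l : Fin t) : blk (0 : Matrix (BlkIdx n) (BlkIdx n) ℝ) j l = 0 := rfl

theorem blk_one_self (j : Fin t) : blk (1 : Matrix (BlkIdx n) (BlkIdx n) ℝ) j j = 1 := by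
  ext x y
  by_cases h : x = y <;>
    simp [blk_apply, Matrix.one_apply, h, Sigma.ext_iff]

theorem blk_one_ne {j l : Fin t} (h : j ≠ l) :
    blk (1 : Matrix (BlkIdx n) (BlkIdx n) ℝ) j l = 0 := by
  ext x y
  simp [blk_apply, Matrix.one_apply, Sigma.ext_iff, h]

theorem blk_sum {ι : Type*} (s : Finset ι) (F : ι → Matrix (BlkIdx n) (BlkIdx n) ℝ)
    (j l : Fin t) : blk (∑ i ∈ s, F i) j l = ∑ i ∈ s, blk (F i) j l := by
  ext x y
  simp [blk_apply, Matrix.sum_apply]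

theorem isBlockDiag_iff_blk {M : Matrix (BlkIdx n) (BlkIdx n) ℝ} :
    IsBlockDiag M ↔ ∀ j l, j ≠ l → blk M j l = 0 := by
  constructor
  · intro h j l hjl
    ext x y
    exact h ⟨j, x⟩ ⟨l, y⟩ hjl
  · rintro h ⟨j, x⟩ ⟨l, y⟩ hjl
    have := h j l hjl
    calc M ⟨j, x⟩ ⟨l, y⟩ = blk M j l x y := rfl
      _ = 0 := by rw [this]; rfl

theorem blk_mul_left_bd {B : Matrix (BlkIdx n) (BlkIdx n) ℝ} (hB : IsBlockDiag B)
    (M : Matrix (BlkIdx n) (BlkIdx n) ℝ) (j l : Fin t) :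
    blk (B * M) j l = blk B j j * blk M j l := by
  rw [blk_mul]
  rw [Finset.sum_eq_single j]
  · intro c _ hc
    rw [(isBlockDiag_iff_blk.1 hB) j c (Ne.symm hc), Matrix.zero_mul]
  · intro h; exact absurd (Finset.mem_univ j) h

theorem blk_mul_right_bd {B : Matrix (BlkIdx n) (BlkIdx n) ℝ} (hB : IsBlockDiag B)
    (M : Matrix (BlkIdx n) (BlkIdx n) ℝ) (j l : Fin t) :
    blk (M * B) j l = blk M j l * blk B l l := by
  rw [blk_mul]
  rw [Finset.sum_eq_single l]
  · intro c _ hc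
    rw [(isBlockDiag_iff_blk.1 hB) c l hc, Matrix.mul_zero]
  · intro h; exact absurd (Finset.mem_univ l) h

theorem blk_conj {B : Matrix (BlkIdx n) (BlkIdx n) ℝ} (hB : IsBlockDiag B)
    (U : Matrix (BlkIdx n) (BlkIdx n) ℝ) (l l' : Fin t) :
    blk (Uᵀ * B * U) l l' = ∑ c, (blk U c l)ᵀ * blk B c c * blk U c l' := by
  rw [Matrix.mul_assoc, blk_mul]
  congr 1
  funext c
  rw [blk_transpose, blk_mul_left_bd hB, ← Matrix.mul_assoc]

end AuxBlocks

section AuxPerm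

set_option linter.unusedSectionVars false

variable {I : Type*} [DecidableEq I] [Fintype I]

local notation "PM" => Equiv.Perm.permMatrix ℝ

theorem permMatrix_apply (σ : Equiv.Perm I) (i j : I) :
    PM σ i j = if σ i = j then 1 else 0 := by
  simp [Equiv.Perm.permMatrix, PEquiv.toMatrix_apply, Equiv.toPEquiv_apply, Option.mem_def,
    eq_comm]

theorem mul_permMatrix_apply (σ : Equiv.Perm I) (D : Matrix I I ℝ) (p q : I) :
    (D * PM σ) p q = D p (σ.symm q) := by
  rw [Matrix.mul_apply]
  rw [Finset.sum_eq_single (σ.symm q)]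
  · rw [permMatrix_apply, if_pos (Equiv.apply_symm_apply σ q), mul_one]
  · intro c _ hc
    rw [permMatrix_apply, if_neg, mul_zero]
    intro h
    exact hc (by rw [← h, Equiv.symm_apply_apply])
  · intro h; exact absurd (Finset.mem_univ _) h

theorem transpose_permMatrix (σ : Equiv.Perm I) :
    (PM σ)ᵀ = PM σ.symm := by
  ext i j
  rw [Matrix.transpose_apply, permMatrix_apply, permMatrix_apply]
  by_cases h : σ j = i
  · rw [if_pos h, if_pos (by rw [← h, Equiv.symm_apply_apply])]
  · rw [if_neg h, if_neg (by intro hh; exact h (by rw [← hh, Equiv.apply_symm_apply]))]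

theorem permMatrix_mul_permMatrix (σ τ : Equiv.Perm I) :
    PM σ * PM τ = PM (σ.trans τ) := by
  ext i k
  rw [mul_permMatrix_apply, permMatrix_apply, permMatrix_apply]
  by_cases h : σ i = τ.symm k
  · rw [if_pos h, if_pos (by rw [Equiv.trans_apply, h, Equiv.apply_symm_apply])]
  · rw [if_neg h, if_neg ?_]
    rw [Equiv.trans_apply]
    intro hh
    exact h (by rw [← hh, Equiv.symm_apply_apply])

theorem permMatrix_refl_eq_one :
    PM (Equiv.refl I) = 1 := by
  ext i j
  rw [permMatrix_apply, Matrix.one_apply]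
  exact if_congr Iff.rfl rfl rfl

theorem permMatrix_mul_transpose_self (σ : Equiv.Perm I) :
    PM σ * (PM σ)ᵀ = 1 := by
  rw [transpose_permMatrix, permMatrix_mul_permMatrix,
    show σ.trans σ.symm = Equiv.refl I from Equiv.self_trans_symm σ, permMatrix_refl_eq_one]

theorem permMatrix_transpose_mul_self (σ : Equiv.Perm I) :
    (PM σ)ᵀ * PM σ = 1 := by
  rw [transpose_permMatrix, permMatrix_mul_permMatrix,
    show σ.symm.trans σ = Equiv.refl I from Equiv.symm_trans_self σ, permMatrix_refl_eq_one]

theorem isUnit_permMatrix (σ : Equiv.Perm I) : IsUnit (PM σ) :=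
  ⟨⟨PM σ, (PM σ)ᵀ, permMatrix_mul_transpose_self σ,
    permMatrix_transpose_mul_self σ⟩, rfl⟩

theorem permMatrix_conj_apply (σ : Equiv.Perm I) (D : Matrix I I ℝ) (p q : I) :
    ((PM σ)ᵀ * D * PM σ) p q = D (σ.symm p) (σ.symm q) := by
  rw [mul_permMatrix_apply, transpose_permMatrix, Matrix.mul_apply]
  rw [Finset.sum_eq_single (σ.symm p)]
  · rw [permMatrix_apply, if_pos rfl, one_mul]
  · intro c _ hc
    rw [permMatrix_apply, if_neg, zero_mul]
    intro h
    exact hc (by rw [← h])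
  · intro h; exact absurd (Finset.mem_univ _) h

end AuxPerm

section AuxKron

variable {m a b : ℕ}

theorem vecM_add (X Y : Matrix (Fin a) (Fin b) ℝ) : vecM (X + Y) = vecM X + vecM Y := rfl

theorem vecM_eq_zero_iff {X : Matrix (Fin a) (Fin b) ℝ} : vecM X = 0 ↔ X = 0 := by
  constructor
  · intro h
    ext r c
    exact congrFun h (c, r)
  · rintro rfl; rfl

theorem kron_mulVec (B : Matrix (Fin b) (Fin b) ℝ) (A : Matrix (Fin a) (Fin a) ℝ)
    (X : Matrix (Fin a) (Fin b) ℝ) :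
    (B ⊗ₖ A) *ᵥ vecM X = vecM (A * X * Bᵀ) := by
  funext p
  obtain ⟨c, r⟩ := p
  simp only [Matrix.mulVec, dotProduct, Matrix.kroneckerMap_apply, vecM,
    Matrix.mul_apply, Matrix.transpose_apply]
  rw [Fintype.sum_prod_type]
  refine Finset.sum_congr rfl fun c' _ => ?_
  rw [Finset.sum_mul]
  exact Finset.sum_congr rfl fun r' _ => by ring

/-- The single-`i` building block of `Gjk`. -/
def Gb (Aj : Matrix (Fin a) (Fin a) ℝ) (Ak : Matrix (Fin b) (Fin b) ℝ) :
    Matrix ((Fin b × Fin a) ⊕ (Fin b × Fin a)) ((Fin b × Fin a) ⊕ (Fin b × Fin a)) ℝ :=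
  Matrix.fromBlocks
    ((1 : Matrix (Fin b) (Fin b) ℝ) ⊗ₖ Aj) (Akᵀ ⊗ₖ (1 : Matrix (Fin a) (Fin a) ℝ))
    ((1 : Matrix (Fin b) (Fin b) ℝ) ⊗ₖ Ajᵀ) (Ak ⊗ₖ (1 : Matrix (Fin a) (Fin a) ℝ))

theorem Gb_conj (Aj : Matrix (Fin a) (Fin a) ℝ) (Ak : Matrix (Fin b) (Fin b) ℝ) :
    (Gb Aj Ak)ᵀ * Gb Aj Ak =
      Matrix.fromBlocks
        ((1 : Matrix (Fin b) (Fin b) ℝ) ⊗ₖ (Ajᵀ * Aj + Aj * Ajᵀ))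
        (Ak ⊗ₖ Aj + Akᵀ ⊗ₖ Ajᵀ)
        (Ak ⊗ₖ Aj + Akᵀ ⊗ₖ Ajᵀ)
        ((Akᵀ * Ak + Ak * Akᵀ) ⊗ₖ (1 : Matrix (Fin a) (Fin a) ℝ)) := by
  rw [Gb, Matrix.fromBlocks_transpose, Matrix.fromBlocks_multiply]
  rw [← Matrix.kroneckerMap_transpose, ← Matrix.kroneckerMap_transpose,
    ← Matrix.kroneckerMap_transpose, ← Matrix.kroneckerMap_transpose]
  simp only [Matrix.transpose_one, Matrix.transpose_transpose]
  rw [← Matrix.mul_kronecker_mul, ← Matrix.mul_kronecker_mul, ← Matrix.mul_kronecker_mul,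
    ← Matrix.mul_kronecker_mul, ← Matrix.mul_kronecker_mul, ← Matrix.mul_kronecker_mul,
    ← Matrix.mul_kronecker_mul, ← Matrix.mul_kronecker_mul]
  simp only [Matrix.one_mul, Matrix.mul_one]
  rw [← Matrix.kronecker_add, ← Matrix.add_kronecker]
  rw [add_comm (Ak * Akᵀ) (Akᵀ * Ak), add_comm (Akᵀ ⊗ₖ Ajᵀ) (Ak ⊗ₖ Aj)]

theorem Mjk_eq_sum_conj (Aj : Fin m → Matrix (Fin a) (Fin a) ℝ)
    (Ak : Fin m → Matrix (Fin b) (Fin b) ℝ) :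
    Mjk Aj Ak = ∑ i, (Gb (Aj i) (Ak i))ᵀ * Gb (Aj i) (Ak i) :=
  Finset.sum_congr rfl fun i _ => (Gb_conj (Aj i) (Ak i)).symm

theorem Gb_mulVec (Aj : Matrix (Fin a) (Fin a) ℝ) (Ak : Matrix (Fin b) (Fin b) ℝ)
    (X Y : Matrix (Fin a) (Fin b) ℝ) :
    Gb Aj Ak *ᵥ Sum.elim (vecM X) (vecM Y) =
      Sum.elim (vecM (Aj * X + Y * Ak)) (vecM (Ajᵀ * X + Y * Akᵀ)) := by
  rw [Gb, Matrix.fromBlocks_mulVec]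
  simp only [Sum.elim_comp_inl, Sum.elim_comp_inr]
  rw [kron_mulVec, kron_mulVec, kron_mulVec, kron_mulVec]
  simp only [Matrix.transpose_one, Matrix.transpose_transpose, Matrix.mul_one, Matrix.one_mul]
  rw [← vecM_add, ← vecM_add]

theorem dotProduct_sum' {ι N : Type*} [Fintype N] (s : Finset ι) (v : N → ℝ) (w : ι → N → ℝ) :
    v ⬝ᵥ (∑ i ∈ s, w i) = ∑ i ∈ s, v ⬝ᵥ w i := by
  simp only [dotProduct, Finset.sum_apply, Finset.mul_sum]
  exact Finset.sum_comm

theorem sum_mulVec' {ι N : Type*} [Fintype N] (s : Finset ι) (A : ι → Matrix N N ℝ) (v : N → ℝ) :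
    (∑ i ∈ s, A i) *ᵥ v = ∑ i ∈ s, A i *ᵥ v := by
  funext p
  simp only [Matrix.mulVec, dotProduct, Matrix.sum_apply, Finset.sum_apply,
    Finset.sum_mul]
  exact Finset.sum_comm

theorem mulVec_eq_zero_of_isUnit {N : Type*} [Fintype N] [DecidableEq N]
    {M : Matrix N N ℝ} (h : IsUnit M) {v : N → ℝ} (hv : M *ᵥ v = 0) : v = 0 := by
  obtain ⟨u, hu⟩ := h
  have : ((↑u⁻¹ : Matrix N N ℝ) * M) *ᵥ v = 0 := by
    rw [← Matrix.mulVec_mulVec, hv, Matrix.mulVec_zero]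
  rwa [← hu, u.inv_mul, Matrix.one_mulVec] at this

theorem sumElim_eq_zero_iff {α β : Type*} {f : α → ℝ} {g : β → ℝ} :
    Sum.elim f g = 0 ↔ f = 0 ∧ g = 0 := by
  constructor
  · intro h
    constructor
    · funext x; exact congrFun h (Sum.inl x)
    · funext x; exact congrFun h (Sum.inr x)
  · rintro ⟨rfl, rfl⟩
    funext x; cases x <;> rfl

theorem eq_zero_of_isUnit_Mjk {Aj : Fin m → Matrix (Fin a) (Fin a) ℝ}
    {Ak : Fin m → Matrix (Fin b) (Fin b) ℝ} (h : IsUnit (Mjk Aj Ak))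
    {X Y : Matrix (Fin a) (Fin b) ℝ}
    (h1 : ∀ i, Aj i * X + Y * Ak i = 0) (h2 : ∀ i, (Aj i)ᵀ * X + Y * (Ak i)ᵀ = 0) :
    X = 0 ∧ Y = 0 := by
  have hv : Mjk Aj Ak *ᵥ Sum.elim (vecM X) (vecM Y) = 0 := by
    rw [Mjk_eq_sum_conj, sum_mulVec']
    refine Finset.sum_eq_zero fun i _ => ?_
    rw [← Matrix.mulVec_mulVec, Gb_mulVec, h1 i, h2 i]
    show (Gb (Aj i) (Ak i))ᵀ *ᵥ Sum.elim (vecM 0) (vecM 0) = 0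
    have : Sum.elim (vecM (0 : Matrix (Fin a) (Fin b) ℝ)) (vecM (0 : Matrix (Fin a) (Fin b) ℝ))
        = (0 : (Fin b × Fin a) ⊕ (Fin b × Fin a) → ℝ) := by
      funext x; cases x <;> rfl
    rw [this, Matrix.mulVec_zero]
  have := mulVec_eq_zero_of_isUnit h hv
  obtain ⟨hX, hY⟩ := sumElim_eq_zero_iff.1 this
  exact ⟨vecM_eq_zero_iff.1 hX, vecM_eq_zero_iff.1 hY⟩

theorem exists_pair_of_not_isUnit_Mjk {Aj : Fin m → Matrix (Fin a) (Fin a) ℝ}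
    {Ak : Fin m → Matrix (Fin b) (Fin b) ℝ} (h : ¬ IsUnit (Mjk Aj Ak)) :
    ∃ X Y : Matrix (Fin a) (Fin b) ℝ, ¬(X = 0 ∧ Y = 0) ∧
      (∀ i, Aj i * X + Y * Ak i = 0) ∧ (∀ i, (Aj i)ᵀ * X + Y * (Ak i)ᵀ = 0) := by
  rw [Matrix.isUnit_iff_isUnit_det, isUnit_iff_ne_zero, not_not] at h
  obtain ⟨v, hv0, hv⟩ := (Matrix.exists_mulVec_eq_zero_iff).2 h
  set X : Matrix (Fin a) (Fin b) ℝ := fun r c => v (Sum.inl (c, r)) with hXdef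
  set Y : Matrix (Fin a) (Fin b) ℝ := fun r c => v (Sum.inr (c, r)) with hYdef
  have hveq : Sum.elim (vecM X) (vecM Y) = v := by
    funext x
    rcases x with ⟨c, r⟩ | ⟨c, r⟩ <;> rfl
  have hGv : ∀ i, Gb (Aj i) (Ak i) *ᵥ v = 0 := by
    have h0 : (0 : ℝ) = ∑ i, (Gb (Aj i) (Ak i) *ᵥ v) ⬝ᵥ (Gb (Aj i) (Ak i) *ᵥ v) := by
      have : v ⬝ᵥ (Mjk Aj Ak *ᵥ v) = 0 := by rw [hv, dotProduct_zero]
      rw [← this, Mjk_eq_sum_conj, sum_mulVec']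
      rw [dotProduct_sum']
      refine Finset.sum_congr rfl fun i _ => ?_
      rw [← Matrix.mulVec_mulVec, Matrix.dotProduct_mulVec, Matrix.vecMul_transpose]
    intro i
    have hnn : ∀ i' ∈ (Finset.univ : Finset (Fin m)),
        (0:ℝ) ≤ (Gb (Aj i') (Ak i') *ᵥ v) ⬝ᵥ (Gb (Aj i') (Ak i') *ᵥ v) :=
      fun i' _ => Finset.sum_nonneg fun x _ => mul_self_nonneg _
    have := (Finset.sum_eq_zero_iff_of_nonneg hnn).1 h0.symm i (Finset.mem_univ i)
    exact dotProduct_self_eq_zero.1 this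
  refine ⟨X, Y, ?_, ?_, ?_⟩
  · rintro ⟨hX, hY⟩
    apply hv0
    rw [← hveq, hX, hY]
    funext x; cases x <;> rfl
  · intro i
    have := hGv i
    rw [← hveq, Gb_mulVec] at this
    exact vecM_eq_zero_iff.1 (sumElim_eq_zero_iff.1 this).1
  · intro i
    have := hGv i
    rw [← hveq, Gb_mulVec] at this
    exact vecM_eq_zero_iff.1 (sumElim_eq_zero_iff.1 this).2

end AuxKron

section AuxSplit

/-- Conjugation entry formula. -/
theorem conj_entry {I : Type*} [Fintype I] {J : Type*} [Fintype J]
    (V : Matrix I J ℝ) (M : Matrix I I ℝ) (i j : J) :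
    (Vᵀ * M * V) i j = (fun x => V x i) ⬝ᵥ (M *ᵥ fun x => V x j) := by
  simp only [Matrix.mul_apply, Matrix.transpose_apply, dotProduct, Matrix.mulVec,
    Finset.sum_mul, Finset.mul_sum]
  rw [Finset.sum_comm]
  refine Finset.sum_congr rfl fun x _ => Finset.sum_congr rfl fun y _ => by ring

/-- A nontrivial idempotent that is self-adjoint w.r.t. all the bilinear forms `B i`
splits the family `B`. -/
theorem canSplit_of_proj {N m : ℕ} (B : Fin m → Matrix (Fin N) (Fin N) ℝ)
    (P : Matrix (Fin N) (Fin N) ℝ) (hP : P * P = P) (hP0 : P ≠ 0) (hP1 : P ≠ 1)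
    (hsa : ∀ i, B i * P = Pᵀ * B i) : CanSplit B := by
  classical
  set φ := P.mulVecLin with hφdef
  have hφφ : ∀ x, φ (φ x) = φ x := by
    intro x
    have h1 : φ (φ x) = (P * P).mulVecLin x := by
      rw [Matrix.mulVecLin_mul]; rfl
    rw [h1, hP]
  set p := LinearMap.range φ with hpdef
  -- the projection onto `p`
  have hmem : ∀ x, φ x ∈ p := fun x => LinearMap.mem_range_self φ x
  set f : (Fin N → ℝ) →ₗ[ℝ] p := φ.codRestrict p hmem with hfdef
  have hf : ∀ x : p, f x = x := by
    rintro ⟨x, y, rfl⟩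
    apply Subtype.ext
    exact hφφ y
  have hcompl : IsCompl p (LinearMap.ker f) := LinearMap.isCompl_of_proj hf
  have hkerf : LinearMap.ker f = LinearMap.ker φ := LinearMap.ker_codRestrict p φ hmem
  rw [hkerf] at hcompl
  set r := Module.finrank ℝ p with hrdef
  set s := Module.finrank ℝ (LinearMap.ker φ) with hsdef
  have hrs : r + s = N := by
    have h1 := LinearMap.finrank_range_add_finrank_ker φ
    rwa [Module.finrank_pi, Fintype.card_fin] at h1
  have hr : 0 < r := by
    rw [hrdef, Module.finrank_pos_iff_exists_ne_zero]
    obtain ⟨i, j, hij⟩ : ∃ i j, P i j ≠ 0 := by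
      by_contra hc
      push_neg at hc
      exact hP0 (by ext i j; exact hc i j)
    refine ⟨⟨φ (Pi.single j 1), hmem _⟩, fun hz => hij ?_⟩
    have h2 : φ (Pi.single j 1) = 0 := Subtype.ext_iff.1 hz
    have h3 := congrFun h2 i
    simpa [hφdef, Matrix.mulVecLin_apply, Matrix.mulVec_single] using h3
  have hs : 0 < s := by
    rw [hsdef, Module.finrank_pos_iff_exists_ne_zero]
    by_contra hc
    push_neg at hc
    apply hP1
    have hid : ∀ x, φ x = x := by
      intro x
      have hk : φ (φ x - x) = 0 := by rw [map_sub, hφφ, sub_self]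
      have h4 : (⟨φ x - x, LinearMap.mem_ker.2 hk⟩ : LinearMap.ker φ) = 0 :=
        hc ⟨φ x - x, LinearMap.mem_ker.2 hk⟩
      have h5 : φ x - x = 0 := Subtype.ext_iff.1 h4
      exact sub_eq_zero.1 h5
    ext i j
    have h6 := congrFun (hid (Pi.single j 1)) i
    simp only [Matrix.mulVecLin_apply, Matrix.mulVec_single_one, Matrix.col_apply, mul_one, hφdef] at h6
    rw [h6, Matrix.one_apply, Pi.single_apply]
  -- bases of range and kernel
  have b1 : Module.Basis (Fin r) ℝ p := Module.finBasis ℝ p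
  have b2 : Module.Basis (Fin s) ℝ (LinearMap.ker φ) := Module.finBasis ℝ (LinearMap.ker φ)
  set bb : Module.Basis (Fin r ⊕ Fin s) ℝ (Fin N → ℝ) :=
    (b1.prod b2).map (Submodule.prodEquivOfIsCompl p (LinearMap.ker φ) hcompl) with hbbdef
  have hbbl : ∀ a, bb (Sum.inl a) ∈ p := by
    intro a
    rw [hbbdef, Module.Basis.map_apply, Submodule.coe_prodEquivOfIsCompl',
      Module.Basis.prod_apply_inl_fst, Module.Basis.prod_apply_inl_snd]
    simpa using (b1 a).2
  have hbbr : ∀ a, bb (Sum.inr a) ∈ LinearMap.ker φ := by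
    intro a
    rw [hbbdef, Module.Basis.map_apply, Submodule.coe_prodEquivOfIsCompl',
      Module.Basis.prod_apply_inr_fst, Module.Basis.prod_apply_inr_snd]
    simpa using (b2 a).2
  -- orthogonality of range and kernel w.r.t. each B i
  have hdp : ∀ (M : Matrix (Fin N) (Fin N) ℝ) (w u : Fin N → ℝ),
      (M *ᵥ w) ⬝ᵥ u = w ⬝ᵥ (Mᵀ *ᵥ u) := by
    intro M w u
    simp only [dotProduct, Matrix.mulVec, Matrix.transpose_apply, Finset.sum_mul,
      Finset.mul_sum]
    rw [Finset.sum_comm]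
    exact Finset.sum_congr rfl fun x _ => Finset.sum_congr rfl fun y _ => by ring
  have key1 : ∀ (uu vv : Fin N → ℝ), uu ∈ p → vv ∈ LinearMap.ker φ →
      ∀ i, uu ⬝ᵥ (B i *ᵥ vv) = 0 := by
    rintro uu vv ⟨w, rfl⟩ hv i
    have hvz : P *ᵥ vv = 0 := LinearMap.mem_ker.1 hv
    have hφw : φ w = P *ᵥ w := rfl
    rw [hφw, hdp, Matrix.mulVec_mulVec, ← hsa i, ← Matrix.mulVec_mulVec, hvz,
      Matrix.mulVec_zero, dotProduct_zero]
  have key2 : ∀ (uu vv : Fin N → ℝ), uu ∈ p → vv ∈ LinearMap.ker φ →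
      ∀ i, vv ⬝ᵥ (B i *ᵥ uu) = 0 := by
    rintro uu vv ⟨w, rfl⟩ hv i
    have hvz : P *ᵥ vv = 0 := LinearMap.mem_ker.1 hv
    have hφw : φ w = P *ᵥ w := rfl
    rw [hφw, Matrix.mulVec_mulVec, hsa i, ← Matrix.mulVec_mulVec, ← hdp, hvz,
      zero_dotProduct]
  -- the partition
  set k : Fin 2 → ℕ := fun j => if j = 0 then r else s with hkdef
  have hk0 : k 0 = r := if_pos rfl
  have hk1 : k 1 = s := if_neg (by decide)
  -- the block equivalence
  have hcard : Fintype.card (Fin r ⊕ Fin s) = Fintype.card (BlkIdx k) := by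
    rw [Fintype.card_sum, Fintype.card_fin, Fintype.card_fin, Fintype.card_sigma,
      Fin.sum_univ_two, hk0, hk1]
    simp
  set stf : (Fin r ⊕ Fin s) → BlkIdx k :=
    Sum.elim (fun i => ⟨0, Fin.cast hk0.symm i⟩) (fun i => ⟨1, Fin.cast hk1.symm i⟩) with hstf
  have hinj : Function.Injective stf := by
    rintro (a | a) (c | c) h <;>
      simp only [hstf, Sum.elim_inl, Sum.elim_inr, Sigma.mk.inj_iff, heq_eq_eq] at h
    · obtain ⟨-, h2⟩ := h
      have := congrArg Fin.val h2
      simp only [Fin.coe_cast] at this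
      rw [Sum.inl.injEq]
      exact Fin.ext this
    · exact absurd h.1 (by decide)
    · exact absurd h.1 (by decide)
    · obtain ⟨-, h2⟩ := h
      have := congrArg Fin.val h2
      simp only [Fin.coe_cast] at this
      rw [Sum.inr.injEq]
      exact Fin.ext this
  set st : (Fin r ⊕ Fin s) ≃ BlkIdx k :=
    Equiv.ofBijective stf ((Fintype.bijective_iff_injective_and_card stf).2 ⟨hinj, hcard⟩)
    with hstdef
  have hst1 : ∀ a, (st (Sum.inl a)).1 = 0 := fun a => rfl
  have hst2 : ∀ a, (st (Sum.inr a)).1 = 1 := fun a => rfl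
  -- column basis indexed by `Fin N`
  set g : (Fin r ⊕ Fin s) ≃ Fin N := finSumFinEquiv.trans (finCongr hrs) with hgdef
  set e : Fin N ≃ BlkIdx k := (g.symm.trans st) with hedef
  set V : Matrix (Fin N) (Fin N) ℝ := (Pi.basisFun ℝ (Fin N)).toMatrix (bb.reindex g)
    with hVdef
  have hVcol : ∀ x i, V x i = bb (g.symm i) x := by
    intro x i
    rw [hVdef, Module.Basis.toMatrix_apply, Module.Basis.reindex_apply, Pi.basisFun_repr]
  refine ⟨2, k, le_refl 2, ?_, ?_, e, V, ?_, ?_⟩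
  · intro j
    by_cases h : j = 0
    · subst h; rw [hk0]; exact hr
    · have h1 : j = 1 := by omega
      subst h1; rw [hk1]; exact hs
  · rw [Fin.sum_univ_two, hk0, hk1, hrs]
  · have : Invertible V := (Pi.basisFun ℝ (Fin N)).invertibleToMatrix (bb.reindex g)
    exact isUnit_of_invertible V
  · intro i
    intro pp qq hpq
    rw [Matrix.reindex_apply, Matrix.submatrix_apply, conj_entry]
    have hcol : ∀ (w : Fin N), (fun x => V x w) = bb (g.symm w) := by
      intro w; funext x; exact hVcol x w
    rw [hcol, hcol]
    have hblk : ∀ w : Fin N, (st (g.symm w)).1 = (e w).1 := fun w => rfl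
    -- the two columns belong to different summands
    have hpq' : (st (g.symm (e.symm pp))).1 ≠ (st (g.symm (e.symm qq))).1 := by
      rw [hblk, hblk, e.apply_symm_apply, e.apply_symm_apply]
      exact hpq
    rcases hx : g.symm (e.symm pp) with a | a <;> rcases hy : g.symm (e.symm qq) with c | c
    · rw [hx, hy] at hpq'; rw [hst1, hst1] at hpq'; exact absurd rfl hpq'
    · exact key1 _ _ (hbbl a) (hbbr c) i
    · exact key2 _ _ (hbbl c) (hbbr a) i
    · rw [hx, hy] at hpq'; rw [hst2, hst2] at hpq'; exact absurd rfl hpq'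


end AuxSplit

section AuxMain

variable {t : ℕ} {n : Fin t → ℕ}

/-- Block-diagonal indicator projection matrices. -/
def bproj (k : Fin t) : Matrix (BlkIdx n) (BlkIdx n) ℝ :=
  Matrix.diagonal (fun p => if p.1 = k then 1 else 0)

theorem bproj_transpose (k : Fin t) : (bproj (n := n) k)ᵀ = bproj k :=
  Matrix.diagonal_transpose _

theorem bproj_mul_self (k : Fin t) : bproj (n := n) k * bproj k = bproj k := by
  rw [bproj, Matrix.diagonal_mul_diagonal]
  ext p q
  by_cases h : p = q
  · subst h
    by_cases h2 : p.1 = k <;> simp [Matrix.diagonal_apply_eq, h2]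
  · rw [Matrix.diagonal_apply_ne _ h, Matrix.diagonal_apply_ne _ h]

theorem bproj_sum : ∑ k, bproj (n := n) k = 1 := by
  ext p q
  rw [Matrix.sum_apply]
  by_cases h : p = q
  · subst h
    rw [Matrix.one_apply_eq]
    calc ∑ k, bproj (n := n) k p p = ∑ k : Fin t, if p.1 = k then 1 else 0 :=
          Finset.sum_congr rfl fun k _ => by rw [bproj, Matrix.diagonal_apply_eq]
      _ = 1 := by rw [Finset.sum_ite_eq Finset.univ p.1 (fun _ => (1:ℝ))]; simp
  · rw [Matrix.one_apply_ne h]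
    exact Finset.sum_eq_zero fun k _ => by rw [bproj, Matrix.diagonal_apply_ne _ h]

theorem isBlockDiag_bproj (k : Fin t) : IsBlockDiag (bproj (n := n) k) := by
  intro p q hpq
  exact Matrix.diagonal_apply_ne _ (fun h => hpq (by rw [h]))

theorem blk_bproj_self (k : Fin t) : blk (bproj (n := n) k) k k = 1 := by
  ext x y
  by_cases h : x = y
  · subst h; simp [blk_apply, bproj, Matrix.diagonal_apply_eq, Matrix.one_apply_eq]
  · rw [blk_apply, Matrix.one_apply_ne h, bproj,
      Matrix.diagonal_apply_ne _ (by simp [Sigma.ext_iff, h])]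

theorem blk_bproj_ne {k l : Fin t} (h : l ≠ k) : blk (bproj (n := n) k) l l = 0 := by
  ext x y
  by_cases hxy : x = y
  · subst hxy
    simp [blk_apply, bproj, Matrix.diagonal_apply_eq, h]
  · rw [blk_apply, bproj, Matrix.diagonal_apply_ne _ (by simp [Sigma.ext_iff, hxy])]; rfl

theorem isBlockDiag_iff_commute {M : Matrix (BlkIdx n) (BlkIdx n) ℝ} :
    IsBlockDiag M ↔ ∀ k, M * bproj k = bproj k * M := by
  constructor
  · intro h k
    ext p q
    rw [bproj, Matrix.mul_diagonal, Matrix.diagonal_mul]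
    by_cases hpq : p.1 = q.1
    · rw [hpq, mul_comm]
    · rw [h p q hpq, mul_zero, zero_mul]
  · intro h p q hpq
    have h2 := congrFun (congrFun (h q.1) p) q
    rw [bproj, Matrix.mul_diagonal, Matrix.diagonal_mul, if_pos rfl, if_neg hpq, mul_one,
      zero_mul] at h2
    exact h2

theorem isBlockDiag_mul {M N : Matrix (BlkIdx n) (BlkIdx n) ℝ} (hM : IsBlockDiag M)
    (hN : IsBlockDiag N) : IsBlockDiag (M * N) := by
  rw [isBlockDiag_iff_commute] at hM hN ⊢
  intro k
  rw [Matrix.mul_assoc, hN k, ← Matrix.mul_assoc, hM k, Matrix.mul_assoc]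

theorem isBlockDiag_unit_inv {u : (Matrix (BlkIdx n) (BlkIdx n) ℝ)ˣ}
    (h : IsBlockDiag (u : Matrix (BlkIdx n) (BlkIdx n) ℝ)) :
    IsBlockDiag ((↑u⁻¹ : Matrix (BlkIdx n) (BlkIdx n) ℝ)) := by
  rw [isBlockDiag_iff_commute] at h ⊢
  intro k
  calc (↑u⁻¹ : Matrix (BlkIdx n) (BlkIdx n) ℝ) * bproj k
      = ↑u⁻¹ * bproj k * (↑u * ↑u⁻¹) := by rw [u.mul_inv, Matrix.mul_one]
    _ = ↑u⁻¹ * (bproj k * ↑u) * ↑u⁻¹ := by simp only [Matrix.mul_assoc]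
    _ = ↑u⁻¹ * (↑u * bproj k) * ↑u⁻¹ := by rw [h k]
    _ = (↑u⁻¹ * ↑u) * (bproj k * ↑u⁻¹) := by simp only [Matrix.mul_assoc]
    _ = bproj k * ↑u⁻¹ := by rw [u.inv_mul, Matrix.one_mul]

/-- A block-diagonality-preserving permutation maps blocks to blocks, bijectively. -/
theorem sigma_block (hn : ∀ j, 0 < n j) (σ : Equiv.Perm (BlkIdx n))
    (H : ∀ D : Matrix (BlkIdx n) (BlkIdx n) ℝ, IsBlockDiag D →
      IsBlockDiag ((σ.permMatrix ℝ)ᵀ * D * σ.permMatrix ℝ)) :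
    (∀ a b : BlkIdx n, a.1 = b.1 → (σ a).1 = (σ b).1) ∧
    (∀ a b : BlkIdx n, (σ a).1 = (σ b).1 → a.1 = b.1) := by
  have hpre : ∀ a b : BlkIdx n, a.1 = b.1 → (σ a).1 = (σ b).1 := by
    intro a b hab
    by_contra hne
    set D : Matrix (BlkIdx n) (BlkIdx n) ℝ :=
      fun p q => if p = a ∧ q = b then 1 else 0 with hDdef
    have hDbd : IsBlockDiag D := by
      intro p q hpq
      show (if p = a ∧ q = b then (1:ℝ) else 0) = 0
      rw [if_neg]
      rintro ⟨rfl, rfl⟩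
      exact hpq hab
    have h2 := H D hDbd (σ a) (σ b) hne
    rw [permMatrix_conj_apply, Equiv.symm_apply_apply, Equiv.symm_apply_apply] at h2
    rw [hDdef] at h2
    simp at h2
  refine ⟨hpre, ?_⟩
  set g : Fin t → Fin t := fun l => (σ ⟨l, ⟨0, hn l⟩⟩).1 with hgdef
  have hg : ∀ p : BlkIdx n, (σ p).1 = g p.1 := by
    intro p
    exact hpre p ⟨p.1, ⟨0, hn p.1⟩⟩ rfl
  have hgsurj : Function.Surjective g := by
    intro c
    refine ⟨(σ.symm ⟨c, ⟨0, hn c⟩⟩).1, ?_⟩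
    rw [← hg (σ.symm ⟨c, ⟨0, hn c⟩⟩), Equiv.apply_symm_apply]
  have hginj : Function.Injective g := Finite.injective_iff_surjective.2 hgsurj
  intro a b hab
  apply hginj
  rw [← hg a, ← hg b, hab]

theorem isBDPerm_transpose (hn : ∀ j, 0 < n j) {P : Matrix (BlkIdx n) (BlkIdx n) ℝ}
    (hP : IsBDPerm P) : IsBDPerm Pᵀ := by
  obtain ⟨⟨σ, rfl⟩, H⟩ := hP
  obtain ⟨-, hinj⟩ := sigma_block hn σ H
  constructor
  · exact ⟨σ.symm, transpose_permMatrix σ⟩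
  · intro D hD
    rw [transpose_permMatrix]
    intro p q hpq
    rw [permMatrix_conj_apply, Equiv.symm_symm]
    refine hD _ _ fun hc => hpq ?_
    exact hinj p q hc

theorem isBDPerm_mul {P Q : Matrix (BlkIdx n) (BlkIdx n) ℝ}
    (hP : IsBDPerm P) (hQ : IsBDPerm Q) : IsBDPerm (P * Q) := by
  obtain ⟨⟨σ, rfl⟩, HP⟩ := hP
  obtain ⟨⟨τ, rfl⟩, HQ⟩ := hQ
  constructor
  · exact ⟨σ.trans τ, (permMatrix_mul_permMatrix σ τ).symm ▸ rfl⟩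
  · intro D hD
    have h1 : (σ.permMatrix ℝ * τ.permMatrix ℝ)ᵀ * D * (σ.permMatrix ℝ * τ.permMatrix ℝ)
        = (τ.permMatrix ℝ)ᵀ * ((σ.permMatrix ℝ)ᵀ * D * σ.permMatrix ℝ) * τ.permMatrix ℝ := by
      rw [Matrix.transpose_mul]
      simp only [Matrix.mul_assoc]
    rw [h1]
    exact HQ _ (HP D hD)

/-- Invertibility of `1 + ε • E` for a suitable `ε ≠ 0`. -/
theorem exists_isUnit_one_add_smul {I : Type*} [Fintype I] [DecidableEq I]
    (E : Matrix I I ℝ) : ∃ ε : ℝ, ε ≠ 0 ∧ IsUnit (1 + ε • E) := by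
  classical
  set q : Polynomial ℝ :=
    ((1 : Matrix I I (Polynomial ℝ)) + (Polynomial.X : Polynomial ℝ) • E.map Polynomial.C).det with hqdef
  have hmap : ∀ ε : ℝ,
      ((1 : Matrix I I (Polynomial ℝ)) + (Polynomial.X : Polynomial ℝ) • E.map Polynomial.C).map
        (Polynomial.eval ε) = 1 + ε • E := by
    intro ε
    ext p r
    simp only [Matrix.map_apply, Matrix.add_apply, Matrix.smul_apply, Matrix.map_apply,
      smul_eq_mul, Polynomial.eval_add, Polynomial.eval_mul, Polynomial.eval_X,
      Polynomial.eval_C]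
    by_cases h : p = r
    · subst h
      rw [Matrix.one_apply_eq, Matrix.one_apply_eq]
      simp
    · rw [Matrix.one_apply_ne h, Matrix.one_apply_ne h]
      simp
  have heval : ∀ ε : ℝ, q.eval ε = (1 + ε • E).det := by
    intro ε
    rw [hqdef, ← Polynomial.coe_evalRingHom, RingHom.map_det]
    congr 1
    rw [RingHom.mapMatrix_apply, Polynomial.coe_evalRingHom, hmap]
  have hq0 : q.eval 0 = 1 := by
    rw [heval 0]
    norm_num
  have hqne : q ≠ 0 := fun h => by rw [h] at hq0; simp at hq0
  obtain ⟨ε, hε⟩ := Infinite.exists_notMem_finset (q.roots.toFinset ∪ {0})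
  rw [Finset.mem_union, Finset.mem_singleton] at hε
  push_neg at hε
  refine ⟨ε, hε.2, ?_⟩
  rw [Matrix.isUnit_iff_isUnit_det, isUnit_iff_ne_zero, ← heval]
  intro hz
  exact hε.1 (Multiset.mem_toFinset.2 ((Polynomial.mem_roots hqne).2 hz))

/-- Conjugating a block-diagonal matrix by `1 + ε • E` stays block diagonal when the
relevant compatibility equations hold. -/
theorem isBlockDiag_conj_one_add {B : Matrix (BlkIdx n) (BlkIdx n) ℝ}
    (hB : IsBlockDiag B) {j k : Fin t} (hjk : j ≠ k)
    (E : Matrix (BlkIdx n) (BlkIdx n) ℝ)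
    (hEo : ∀ l l', ¬(l = j ∧ l' = k) → ¬(l = k ∧ l' = j) → blk E l l' = 0)
    (hjk1 : blk B j j * blk E j k + (blk E k j)ᵀ * blk B k k = 0)
    (hkj1 : blk B k k * blk E k j + (blk E j k)ᵀ * blk B j j = 0)
    (ε : ℝ) : IsBlockDiag ((1 + ε • E)ᵀ * B * (1 + ε • E)) := by
  rw [isBlockDiag_iff_blk]
  intro l l' hll'
  rw [blk_conj hB]
  have hU : ∀ c d : Fin t, blk ((1 : Matrix (BlkIdx n) (BlkIdx n) ℝ) + ε • E) c d
      = blk 1 c d + ε • blk E c d := fun c d => by rw [blk_add, blk_smul]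
  have hpair : ∀ c, c ≠ l → c ≠ l' → blk E c l = 0 ∨ blk E c l' = 0 := by
    intro c hcl hcl'
    by_cases h1 : (c = j ∧ l = k) ∨ (c = k ∧ l = j)
    · right
      apply hEo
      · rintro ⟨rfl, rfl⟩
        rcases h1 with ⟨-, h⟩ | ⟨h, -⟩
        · exact hll' h
        · exact hjk h
      · rintro ⟨rfl, rfl⟩
        rcases h1 with ⟨h, -⟩ | ⟨-, h⟩
        · exact hjk h.symm
        · exact hll' h
    · left
      apply hEo
      · rintro ⟨rfl, rfl⟩
        exact h1 (Or.inl ⟨rfl, rfl⟩)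
      · rintro ⟨rfl, rfl⟩
        exact h1 (Or.inr ⟨rfl, rfl⟩)
  have hvan : ∀ c, c ≠ l → c ≠ l' →
      (blk (1 + ε • E) c l)ᵀ * blk B c c * blk (1 + ε • E) c l' = 0 := by
    intro c hcl hcl'
    rcases hpair c hcl hcl' with h1 | h1
    · rw [hU c l, blk_one_ne hcl, h1, smul_zero, add_zero, Matrix.transpose_zero,
        Matrix.zero_mul, Matrix.zero_mul]
    · rw [hU c l', blk_one_ne hcl', h1, smul_zero, add_zero, Matrix.mul_zero]
  rw [Finset.sum_eq_add_of_mem l l' (Finset.mem_univ l) (Finset.mem_univ l') hll'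
    (fun c _ hc => hvan c hc.1 hc.2)]
  have hEll : blk E l l = 0 :=
    hEo l l (fun h => hjk (h.1.symm.trans h.2)) (fun h => hjk (h.2.symm.trans h.1))
  have hEl'l' : blk E l' l' = 0 :=
    hEo l' l' (fun h => hjk (h.1.symm.trans h.2)) (fun h => hjk (h.2.symm.trans h.1))
  have hmain : blk B l l * blk E l l' + (blk E l' l)ᵀ * blk B l' l' = 0 := by
    by_cases h1 : l = j ∧ l' = k
    · obtain ⟨rfl, rfl⟩ := h1
      exact hjk1
    · by_cases h2 : l = k ∧ l' = j
      · obtain ⟨rfl, rfl⟩ := h2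
        exact hkj1
      · rw [hEo l l' h1 h2, hEo l' l (fun h => h2 ⟨h.2, h.1⟩) (fun h => h1 ⟨h.2, h.1⟩),
          Matrix.mul_zero, Matrix.transpose_zero, Matrix.zero_mul, add_zero]
  rw [hU l l, hU l l', hU l' l, hU l' l', hEll, hEl'l', blk_one_self, blk_one_self,
    blk_one_ne hll', blk_one_ne (Ne.symm hll')]
  simp only [smul_zero, add_zero, zero_add, Matrix.transpose_one, Matrix.one_mul,
    Matrix.mul_one, Matrix.transpose_smul, Matrix.mul_smul, Matrix.smul_mul]
  rw [← smul_add, hmain, smul_zero]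

end AuxMain

section AuxNecessity

variable {t : ℕ} {n : Fin t → ℕ}

/-- If a nonzero intertwiner pair exists between blocks `j < k`, then `𝒜` is not
uniquely block diagonalizable. -/
theorem not_uniquelyBD_of_pair {m : ℕ} {j k : Fin t} (hjk : j < k)
    (A : Fin m → Matrix (BlkIdx n) (BlkIdx n) ℝ) (W : Matrix (BlkIdx n) (BlkIdx n) ℝ)
    (hW : IsDiagonalizer A W)
    {X Y : Matrix (Fin (n j)) (Fin (n k)) ℝ} (hXY : ¬(X = 0 ∧ Y = 0))
    (h1 : ∀ i, blk (Wᵀ * A i * W) j j * X + Y * blk (Wᵀ * A i * W) k k = 0)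
    (h2 : ∀ i, (blk (Wᵀ * A i * W) j j)ᵀ * X + Y * (blk (Wᵀ * A i * W) k k)ᵀ = 0) :
    ¬ UniquelyBD A := by
  have hne : j ≠ k := Fin.ne_of_lt hjk
  -- the perturbation matrix
  set E : Matrix (BlkIdx n) (BlkIdx n) ℝ := fun p q =>
    if hp : p.1 = j then
      (if hq : q.1 = k then
        X (Fin.cast (congrArg n hp) p.2) (Fin.cast (congrArg n hq) q.2) else 0)
    else if hp' : p.1 = k then
      (if hq' : q.1 = j then
        Y (Fin.cast (congrArg n hq') q.2) (Fin.cast (congrArg n hp') p.2) else 0)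
    else 0 with hEdef
  have hEjk : blk E j k = X := by
    ext x y
    show (if hp : (j:Fin t) = j then
        (if hq : (k:Fin t) = k then
          X (Fin.cast (congrArg n hp) x) (Fin.cast (congrArg n hq) y) else 0)
      else _) = X x y
    rw [dif_pos rfl, dif_pos rfl]
    simp
  have hEkj : blk E k j = Yᵀ := by
    ext x y
    show (if hp : (k:Fin t) = j then _
      else if hp' : (k:Fin t) = k then
        (if hq' : (j:Fin t) = j then
          Y (Fin.cast (congrArg n hq') y) (Fin.cast (congrArg n hp') x) else 0)
      else 0) = Yᵀ x y
    rw [dif_neg (Ne.symm hne), dif_pos rfl, dif_pos rfl]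
    simp [Matrix.transpose_apply]
  have hEo : ∀ l l', ¬(l = j ∧ l' = k) → ¬(l = k ∧ l' = j) → blk E l l' = 0 := by
    intro l l' hc1 hc2
    ext x y
    show (if hp : l = j then (if hq : l' = k then _ else 0)
      else if hp' : l = k then (if hq' : l' = j then _ else 0) else 0) = (0 : ℝ)
    by_cases hp : l = j
    · rw [dif_pos hp, dif_neg (fun hq => hc1 ⟨hp, hq⟩)]
    · rw [dif_neg hp]
      by_cases hp' : l = k
      · rw [dif_pos hp', dif_neg (fun hq' => hc2 ⟨hp', hq'⟩)]
      · rw [dif_neg hp']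
  -- an invertible perturbation
  obtain ⟨ε, hε0, hεu⟩ := exists_isUnit_one_add_smul E
  set U : Matrix (BlkIdx n) (BlkIdx n) ℝ := 1 + ε • E with hUdef
  -- W * U is a diagonalizer
  have hWU : IsDiagonalizer A (W * U) := by
    refine ⟨hW.1.mul hεu, fun i => ?_⟩
    have hassoc : (W * U)ᵀ * A i * (W * U) = Uᵀ * (Wᵀ * A i * W) * U := by
      rw [Matrix.transpose_mul]
      simp only [Matrix.mul_assoc]
    rw [hassoc]
    refine isBlockDiag_conj_one_add (hW.2 i) hne E hEo ?_ ?_ ε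
    · rw [hEjk, hEkj, Matrix.transpose_transpose]
      exact h1 i
    · rw [hEjk, hEkj]
      have := congrArg Matrix.transpose (h2 i)
      rw [Matrix.transpose_add, Matrix.transpose_mul, Matrix.transpose_mul,
        Matrix.transpose_transpose, Matrix.transpose_transpose, Matrix.transpose_zero] at this
      rw [add_comm] at this
      exact this
  -- suppose uniqueness holds
  intro hUniq
  obtain ⟨D, P, hDbd, hDu, hPbd, hWP⟩ := hUniq.2 W (W * U) hW hWU
  obtain ⟨uW, huW⟩ := hW.1
  have hcan : U = D * P := by
    have h3 : W * U = W * (D * P) := by rw [hWP, Matrix.mul_assoc]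
    calc U = (↑uW⁻¹ * W) * U := by rw [← huW, uW.inv_mul, Matrix.one_mul]
      _ = ↑uW⁻¹ * (W * U) := by rw [Matrix.mul_assoc]
      _ = ↑uW⁻¹ * (W * (D * P)) := by rw [h3]
      _ = (↑uW⁻¹ * W) * (D * P) := by rw [Matrix.mul_assoc]
      _ = D * P := by rw [← huW, uW.inv_mul, Matrix.one_mul]
  obtain ⟨σ, rfl⟩ := hPbd.1
  -- entries of U
  have hUelem : ∀ p q : BlkIdx n, U p q = D p (σ.symm q) := by
    intro p q
    rw [hcan, mul_permMatrix_apply]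
  have hdiag : ∀ q : BlkIdx n, (σ.symm q).1 = q.1 → False → True := fun _ _ _ => trivial
  -- a diagonal entry is 1, so `(σ.symm q).1 = q.1`
  have hblock : ∀ q : BlkIdx n, (σ.symm q).1 = q.1 := by
    intro q
    by_contra hc
    have h4 := hUelem q q
    rw [hDbd q (σ.symm q) (fun h => hc h.symm)] at h4
    have h5 : E q q = 0 := by
      have := hEo q.1 q.1 (fun h => hne (h.1.symm.trans h.2)) (fun h => hne (h.2.symm.trans h.1))
      calc E q q = blk E q.1 q.1 q.2 q.2 := rfl
        _ = 0 := by rw [this]; rfl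
    rw [hUdef] at h4
    simp only [Matrix.add_apply, Matrix.smul_apply, smul_eq_mul, Matrix.one_apply_eq, h5,
      mul_zero, add_zero] at h4
    exact one_ne_zero h4
  -- a nonzero off-diagonal entry forces a contradiction
  have hoff : ∀ (p q : BlkIdx n), p.1 ≠ q.1 → U p q ≠ 0 → False := by
    intro p q hpq hUne
    have h4 := hUelem p q
    by_cases hD0 : D p (σ.symm q) = 0
    · rw [hD0] at h4; exact hUne h4
    · have h5 : p.1 = (σ.symm q).1 := by
        by_contra hc
        exact hD0 (hDbd _ _ hc)
      rw [hblock q] at h5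
      exact hpq h5
  rcases not_and_or.1 hXY with hX | hY
  · obtain ⟨x₀, y₀, hx⟩ : ∃ x₀ y₀, X x₀ y₀ ≠ 0 := by
      by_contra hc
      push_neg at hc
      exact hX (by ext x y; exact hc x y)
    refine hoff ⟨j, x₀⟩ ⟨k, y₀⟩ hne ?_
    have hE : E ⟨j, x₀⟩ ⟨k, y₀⟩ = X x₀ y₀ := by
      calc E ⟨j, x₀⟩ ⟨k, y₀⟩ = blk E j k x₀ y₀ := rfl
        _ = X x₀ y₀ := by rw [hEjk]
    rw [hUdef]
    simp only [Matrix.add_apply, Matrix.smul_apply, smul_eq_mul, hE]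
    rw [Matrix.one_apply_ne (by simp [Sigma.ext_iff, hne])]
    simpa using mul_ne_zero hε0 hx
  · obtain ⟨x₀, y₀, hy⟩ : ∃ x₀ y₀, Y x₀ y₀ ≠ 0 := by
      by_contra hc
      push_neg at hc
      exact hY (by ext x y; exact hc x y)
    refine hoff ⟨k, y₀⟩ ⟨j, x₀⟩ (Ne.symm hne) ?_
    have hE : E ⟨k, y₀⟩ ⟨j, x₀⟩ = Y x₀ y₀ := by
      calc E ⟨k, y₀⟩ ⟨j, x₀⟩ = blk E k j y₀ x₀ := rfl
        _ = Y x₀ y₀ := by rw [hEkj]; rfl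
    rw [hUdef]
    simp only [Matrix.add_apply, Matrix.smul_apply, smul_eq_mul, hE]
    rw [Matrix.one_apply_ne (by simp [Sigma.ext_iff, Ne.symm hne])]
    simpa using mul_ne_zero hε0 hy

end AuxNecessity

section AuxSufficiency

variable {t : ℕ} {n : Fin t → ℕ}

/-- Any diagonalizer-transition matrix of a block-diagonal family with nonsingular
`M_{jk}` and unsplittable diagonal blocks is of the form `D * P`. -/
theorem diagonalizer_eq_DP {m : ℕ} (hn : ∀ j, 0 < n j)
    (B : Fin m → Matrix (BlkIdx n) (BlkIdx n) ℝ) (hBd : ∀ i, IsBlockDiag (B i))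
    (hM : ∀ j k : Fin t, j < k →
      IsUnit (Mjk (fun i => blk (B i) j j) (fun i => blk (B i) k k)))
    (hnosplit : ∀ j, ¬ CanSplit (fun i => blk (B i) j j))
    (U : Matrix (BlkIdx n) (BlkIdx n) ℝ) (hU : IsUnit U)
    (hC : ∀ i, IsBlockDiag (Uᵀ * B i * U)) :
    ∃ D P : Matrix (BlkIdx n) (BlkIdx n) ℝ,
      IsBlockDiag D ∧ IsUnit D ∧ IsBDPerm P ∧ U = D * P := by
  classical
  obtain ⟨uU, huU⟩ := hU
  set Uinv : Matrix (BlkIdx n) (BlkIdx n) ℝ := (↑uU⁻¹ : Matrix (BlkIdx n) (BlkIdx n) ℝ)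
    with hUinv
  have hUUi : U * Uinv = 1 := by rw [← huU]; exact uU.mul_inv
  have hUiU : Uinv * U = 1 := by rw [← huU]; exact uU.inv_mul
  have hUT : Uinvᵀ * Uᵀ = 1 := by rw [← Matrix.transpose_mul, hUUi, Matrix.transpose_one]
  have hTU : Uᵀ * Uinvᵀ = 1 := by rw [← Matrix.transpose_mul, hUiU, Matrix.transpose_one]
  set R : Fin t → Matrix (BlkIdx n) (BlkIdx n) ℝ := fun k => U * bproj k * Uinv with hRdef
  have hRU : ∀ k, R k * U = U * bproj k := by
    intro k
    calc U * bproj k * Uinv * U = U * bproj k * (Uinv * U) := by simp only [Matrix.mul_assoc]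
      _ = U * bproj k := by rw [hUiU, Matrix.mul_one]
  have hRN : ∀ i k, B i * R k = (R k)ᵀ * B i := by
    intro i k
    have hBU : B i * U = Uinvᵀ * (Uᵀ * B i * U) := by
      calc B i * U = 1 * (B i * U) := by rw [Matrix.one_mul]
        _ = Uinvᵀ * Uᵀ * (B i * U) := by rw [hUT]
        _ = Uinvᵀ * (Uᵀ * B i * U) := by simp only [Matrix.mul_assoc]
    have hCU : (Uᵀ * B i * U) * Uinv = Uᵀ * B i := by
      calc (Uᵀ * B i * U) * Uinv = Uᵀ * B i * (U * Uinv) := by simp only [Matrix.mul_assoc]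
        _ = Uᵀ * B i := by rw [hUUi, Matrix.mul_one]
    have hcomm : (Uᵀ * B i * U) * bproj k = bproj k * (Uᵀ * B i * U) :=
      (isBlockDiag_iff_commute.1 (hC i)) k
    have hRT : (R k)ᵀ = Uinvᵀ * bproj k * Uᵀ := by
      rw [hRdef]
      rw [Matrix.transpose_mul, Matrix.transpose_mul, bproj_transpose]
      simp only [Matrix.mul_assoc]
    calc B i * (U * bproj k * Uinv)
        = (B i * U) * bproj k * Uinv := by simp only [Matrix.mul_assoc]
      _ = (Uinvᵀ * (Uᵀ * B i * U)) * bproj k * Uinv := by rw [hBU]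
      _ = Uinvᵀ * ((Uᵀ * B i * U) * bproj k) * Uinv := by simp only [Matrix.mul_assoc]
      _ = Uinvᵀ * (bproj k * (Uᵀ * B i * U)) * Uinv := by rw [hcomm]
      _ = Uinvᵀ * bproj k * ((Uᵀ * B i * U) * Uinv) := by simp only [Matrix.mul_assoc]
      _ = Uinvᵀ * bproj k * (Uᵀ * B i) := by rw [hCU]
      _ = (Uinvᵀ * bproj k * Uᵀ) * B i := by simp only [Matrix.mul_assoc]
      _ = (R k)ᵀ * B i := by rw [hRT]
  have hRR : ∀ k, R k * R k = R k := by
    intro k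
    calc (U * bproj k * Uinv) * (U * bproj k * Uinv)
        = U * bproj k * ((Uinv * U) * (bproj k * Uinv)) := by simp only [Matrix.mul_assoc]
      _ = U * bproj k * (bproj k * Uinv) := by rw [hUiU, Matrix.one_mul]
      _ = U * (bproj k * bproj k) * Uinv := by simp only [Matrix.mul_assoc]
      _ = U * bproj k * Uinv := by rw [bproj_mul_self]
  have hRsum : ∑ k, R k = 1 := by
    have h1 : ∀ k, R k = U * (bproj k * Uinv) := fun k =>
      Matrix.mul_assoc U (bproj k) Uinv
    calc ∑ k, R k = ∑ k, U * (bproj k * Uinv) := Finset.sum_congr rfl fun k _ => h1 k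
      _ = U * ∑ k, bproj k * Uinv := by rw [Finset.mul_sum]
      _ = U * ((∑ k, bproj (n := n) k) * Uinv) := by rw [Finset.sum_mul]
      _ = U * Uinv := by rw [bproj_sum, Matrix.one_mul]
      _ = 1 := hUUi
  have hRoff : ∀ k j' l', j' < l' → blk (R k) j' l' = 0 ∧ blk (R k) l' j' = 0 := by
    intro k j' l' hjl
    have h1 : ∀ i, blk (B i) j' j' * blk (R k) j' l'
        + (-(blk (R k) l' j')ᵀ) * blk (B i) l' l' = 0 := by
      intro i
      have e1 := congrArg (fun M => blk M j' l') (hRN i k)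
      rw [blk_mul_left_bd (hBd i), blk_mul_right_bd (hBd i), blk_transpose] at e1
      rw [Matrix.neg_mul, e1, add_neg_cancel]
    have h2 : ∀ i, (blk (B i) j' j')ᵀ * blk (R k) j' l'
        + (-(blk (R k) l' j')ᵀ) * (blk (B i) l' l')ᵀ = 0 := by
      intro i
      have e2 := congrArg (fun M => blk M l' j') (hRN i k)
      rw [blk_mul_left_bd (hBd i), blk_mul_right_bd (hBd i), blk_transpose] at e2
      have e3 := congrArg Matrix.transpose e2
      rw [Matrix.transpose_mul, Matrix.transpose_mul, Matrix.transpose_transpose] at e3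
      rw [Matrix.neg_mul, ← e3, add_neg_cancel]
    obtain ⟨hX0, hY0⟩ := eq_zero_of_isUnit_Mjk (hM j' l' hjl) h1 h2
    refine ⟨hX0, ?_⟩
    have h5 := neg_eq_zero.1 hY0
    ext x y
    have h6 := congrFun (congrFun h5 y) x
    simpa using h6
  have hRbd : ∀ k, IsBlockDiag (R k) := by
    intro k
    rw [isBlockDiag_iff_blk]
    intro j' l' hne
    rcases lt_or_gt_of_ne hne with h | h
    · exact (hRoff k j' l' h).1
    · exact (hRoff k l' j' h).2
  set ρ : ∀ (_ : Fin t) (l : Fin t), Matrix (Fin (n l)) (Fin (n l)) ℝ :=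
    fun k l => blk (R k) l l with hρdef
  have hρsa : ∀ i k l, blk (B i) l l * ρ k l = (ρ k l)ᵀ * blk (B i) l l := by
    intro i k l
    have e1 := congrArg (fun M => blk M l l) (hRN i k)
    rw [blk_mul_left_bd (hBd i), blk_mul_right_bd (hBd i), blk_transpose] at e1
    exact e1
  have hρidem : ∀ k l, ρ k l * ρ k l = ρ k l := by
    intro k l
    have e1 := congrArg (fun M => blk M l l) (hRR k)
    rw [blk_mul] at e1
    rw [Finset.sum_eq_single l (fun c _ hc =>
      by rw [(isBlockDiag_iff_blk.1 (hRbd k)) l c (Ne.symm hc), Matrix.zero_mul])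
      (fun h => absurd (Finset.mem_univ l) h)] at e1
    exact e1
  have hρ01 : ∀ k l, ρ k l = 0 ∨ ρ k l = 1 := by
    intro k l
    by_contra hcon
    push_neg at hcon
    exact hnosplit l (canSplit_of_proj _ (ρ k l) (hρidem k l) hcon.1 hcon.2
      (fun i => hρsa i k l))
  have hρsum : ∀ l, ∑ k, ρ k l = 1 := by
    intro l
    have e1 := congrArg (fun M => blk M l l) hRsum
    rw [blk_sum, blk_one_self] at e1
    exact e1
  have hexu : ∀ l, ∃ k₀, ρ k₀ l = 1 ∧ ∀ k, k ≠ k₀ → ρ k l = 0 := by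
    intro l
    set x₀ : Fin (n l) := ⟨0, hn l⟩
    set sset := Finset.univ.filter (fun k => ρ k l = 1) with hsset
    have hval : ∀ k, (ρ k l) x₀ x₀ = if k ∈ sset then 1 else 0 := by
      intro k
      rcases hρ01 k l with h | h
      · have hns : k ∉ sset := by
          intro hk
          rw [hsset, Finset.mem_filter] at hk
          have h01 : (0 : Matrix (Fin (n l)) (Fin (n l)) ℝ) = 1 := h ▸ hk.2
          have := congrFun (congrFun h01 x₀) x₀
          rw [Matrix.zero_apply, Matrix.one_apply_eq] at this
          exact zero_ne_one this
        rw [h, if_neg hns, Matrix.zero_apply]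
      · rw [h, if_pos (by rw [hsset]; exact Finset.mem_filter.2 ⟨Finset.mem_univ k, h⟩),
          Matrix.one_apply_eq]
    have h6 := congrFun (congrFun (hρsum l) x₀) x₀
    rw [Matrix.sum_apply, Matrix.one_apply_eq] at h6
    rw [Finset.sum_congr rfl (fun k _ => hval k)] at h6
    rw [Finset.sum_ite_mem Finset.univ sset (fun _ => (1:ℝ)), Finset.univ_inter,
      Finset.sum_const, nsmul_eq_mul, mul_one] at h6
    have hcard : sset.card = 1 := by exact_mod_cast h6
    obtain ⟨k₀, hk₀⟩ := Finset.card_eq_one.1 hcard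
    refine ⟨k₀, ?_, ?_⟩
    · have hmem : k₀ ∈ sset := by rw [hk₀]; exact Finset.mem_singleton_self k₀
      rw [hsset, Finset.mem_filter] at hmem
      exact hmem.2
    · intro k hk
      rcases hρ01 k l with h | h
      · exact h
      · exfalso
        apply hk
        have hmem : k ∈ sset := by
          rw [hsset]; exact Finset.mem_filter.2 ⟨Finset.mem_univ k, h⟩
        rw [hk₀, Finset.mem_singleton] at hmem
        exact hmem
  choose f hf1 hf2 using hexu
  have hUblk : ∀ l k', k' ≠ f l → blk U l k' = 0 := by
    intro l k' hk
    have h6 := congrArg (fun M => blk M l k') (hRU k')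
    rw [blk_mul_left_bd (hRbd k'), blk_mul_right_bd (isBlockDiag_bproj k'),
      blk_bproj_self, Matrix.mul_one] at h6
    rw [← h6]
    have h7 : blk (R k') l l = (0 : Matrix (Fin (n l)) (Fin (n l)) ℝ) := hf2 l k' hk
    rw [h7, Matrix.zero_mul]
  have hfsurj : Function.Surjective f := by
    intro k'
    by_contra hc
    push_neg at hc
    set q0 : BlkIdx n := ⟨k', ⟨0, hn k'⟩⟩ with hq0
    have hcol : U *ᵥ Pi.single q0 1 = 0 := by
      funext p
      show (U *ᵥ Pi.single q0 1) p = 0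
      simp only [Matrix.mulVec_single_one, Matrix.col_apply, mul_one]
      have h7 : U p q0 = blk U p.1 k' p.2 ⟨0, hn k'⟩ := rfl
      rw [h7, hUblk p.1 k' (Ne.symm (hc p.1))]
      rfl
    have h8 := mulVec_eq_zero_of_isUnit ⟨uU, huU⟩ hcol
    have h9 := congrFun h8 q0
    rw [Pi.single_eq_same] at h9
    exact one_ne_zero h9
  have hfbij : Function.Bijective f := (Fintype.bijective_iff_surjective_and_card f).2
    ⟨hfsurj, rfl⟩
  have hfinj : Function.Injective f := hfbij.1
  have hle : ∀ l, n (f l) ≤ n l := by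
    intro l
    by_contra hlt
    push_neg at hlt
    set Mb := blk U l (f l) with hMb
    have hni : ¬ Function.Injective (Matrix.mulVecLin Mb) := by
      intro hinj
      have h10 := LinearMap.finrank_le_finrank_of_injective hinj
      rw [Module.finrank_pi, Module.finrank_pi, Fintype.card_fin, Fintype.card_fin] at h10
      omega
    obtain ⟨x1, y1, hxy, hne2⟩ := Function.not_injective_iff.1 hni
    set w := x1 - y1 with hw
    have hw0 : w ≠ 0 := sub_ne_zero.2 hne2
    have hwker : Mb *ᵥ w = 0 := by
      have h11 : Matrix.mulVecLin Mb (x1 - y1) = 0 := by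
        rw [map_sub, hxy, sub_self]
      rwa [Matrix.mulVecLin_apply] at h11
    set v : BlkIdx n → ℝ :=
      fun q => if h : q.1 = f l then w (Fin.cast (congrArg n h) q.2) else 0 with hv
    have hv0 : v ≠ 0 := by
      obtain ⟨y, hy⟩ := Function.ne_iff.1 hw0
      intro hvz
      apply hy
      have := congrFun hvz ⟨f l, y⟩
      rw [hv] at this
      simp only [dif_pos rfl] at this
      simpa using this
    have hUv : U *ᵥ v = 0 := by
      funext p
      show ∑ q, U p q * v q = 0
      rw [← Finset.univ_sigma_univ, Finset.sum_sigma]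
      rw [Finset.sum_eq_single (f l)]
      · have hvz : ∀ z, v ⟨f l, z⟩ = w z := by
          intro z
          show dite _ _ _ = _
          rw [dif_pos rfl]
          simp
        by_cases hpl : p.1 = l
        · obtain ⟨c, x⟩ := p
          simp only at hpl
          subst hpl
          calc ∑ z, U ⟨c, x⟩ ⟨f c, z⟩ * v ⟨f c, z⟩
              = ∑ z, blk U c (f c) x z * w z := by
                refine Finset.sum_congr rfl fun z _ => ?_
                rw [hvz z]
                rfl
            _ = (Mb *ᵥ w) x := rfl
            _ = 0 := by rw [hwker]; rfl
        · refine Finset.sum_eq_zero fun z _ => ?_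
          have h12 : U p ⟨f l, z⟩ = blk U p.1 (f l) p.2 z := rfl
          rw [h12, hUblk p.1 (f l) (fun h => hpl (hfinj h).symm)]
          exact zero_mul _
      · intro c _ hcl
        refine Finset.sum_eq_zero fun z _ => ?_
        have h13 : v ⟨c, z⟩ = 0 := by
          show dite _ _ _ = _
          rw [dif_neg hcl]
        rw [h13, mul_zero]
      · intro h
        exact absurd (Finset.mem_univ (f l)) h
    exact hv0 (mulVec_eq_zero_of_isUnit ⟨uU, huU⟩ hUv)
  have hsize : ∀ l, n (f l) = n l := by
    have hsums : ∑ l, n (f l) = ∑ l, n l := Equiv.sum_comp (Equiv.ofBijective f hfbij) n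
    intro l
    exact (Finset.sum_eq_sum_iff_of_le (fun i _ => hle i)).1 hsums l (Finset.mem_univ l)
  set sfun : BlkIdx n → BlkIdx n := fun p => ⟨f p.1, Fin.cast (hsize p.1).symm p.2⟩
    with hsfun
  have hsinj : Function.Injective sfun := by
    rintro ⟨a, x⟩ ⟨c, y⟩ h
    rw [hsfun] at h
    simp only [Sigma.mk.inj_iff] at h
    obtain ⟨h1, h2⟩ := h
    have hac : a = c := hfinj h1
    subst hac
    have h3 := eq_of_heq h2
    have h4 := congrArg Fin.val h3
    simp only [Fin.coe_cast] at h4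
    rw [Sigma.mk.inj_iff]
    exact ⟨rfl, heq_of_eq (Fin.ext h4)⟩
  set σ : Equiv.Perm (BlkIdx n) :=
    Equiv.ofBijective sfun ((Fintype.bijective_iff_injective_and_card sfun).2 ⟨hsinj, rfl⟩)
    with hσdef
  have hσapp : ∀ p, σ p = sfun p := fun _ => rfl
  set P : Matrix (BlkIdx n) (BlkIdx n) ℝ := σ.permMatrix ℝ with hPdef
  set D : Matrix (BlkIdx n) (BlkIdx n) ℝ := U * Pᵀ with hDdef
  have hDapp : ∀ p q, D p q = U p (σ q) := by
    intro p q
    rw [hDdef, hPdef, transpose_permMatrix, mul_permMatrix_apply, Equiv.symm_symm]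
  have hDblk : IsBlockDiag D := by
    intro p q hpq
    rw [hDapp]
    have h14 : U p (σ q) = blk U p.1 (f q.1) p.2 (σ q).2 := rfl
    rw [h14, hUblk p.1 (f q.1) (fun h => hpq (hfinj h).symm)]
    rfl
  have hDunit : IsUnit D := by
    rw [hDdef]
    refine IsUnit.mul ⟨uU, huU⟩ ?_
    rw [hPdef, transpose_permMatrix]
    exact isUnit_permMatrix σ.symm
  have hBDP : IsBDPerm P := by
    refine ⟨⟨σ, hPdef⟩, fun D' hD' => ?_⟩
    intro p q hpq
    rw [hPdef, permMatrix_conj_apply]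
    refine hD' _ _ fun hc => hpq ?_
    have h15 : p.1 = f ((σ.symm p).1) := by
      conv_lhs => rw [← σ.apply_symm_apply p]
      rfl
    have h16 : q.1 = f ((σ.symm q).1) := by
      conv_lhs => rw [← σ.apply_symm_apply q]
      rfl
    rw [h15, h16, hc]
  refine ⟨D, P, hDblk, hDunit, hBDP, ?_⟩
  rw [hDdef, Matrix.mul_assoc, hPdef, permMatrix_transpose_mul_self, Matrix.mul_one]

end AuxSufficiency


/-- Theorem 2.1: characterization of unique `τ_n`-block diagonalizability
via nonsingularity of the matrices `M_{jk}`. -/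
theorem uniquelyBD_iff_isUnit_Mjk {t m : ℕ} {n : Fin t → ℕ} (hn : ∀ j, 0 < n j)
    (A : Fin m → Matrix (BlkIdx n) (BlkIdx n) ℝ)
    (W : Matrix (BlkIdx n) (BlkIdx n) ℝ) (hW : IsDiagonalizer A W)
    (Ab : ∀ j : Fin t, Fin m → Matrix (Fin (n j)) (Fin (n j)) ℝ)
    (hAb : ∀ j i, Ab j i = dblock (Wᵀ * A i * W) j)
    (hnosplit : ∀ j, ¬ CanSplit (Ab j)) :
    UniquelyBD A ↔ ∀ j k : Fin t, j < k → IsUnit (Mjk (Ab j) (Ab k)) := by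
  have hAbeq : ∀ j, Ab j = fun i => blk (Wᵀ * A i * W) j j := by
    intro j
    funext i
    rw [hAb j i]
    rfl
  constructor
  · intro hU j k hjk
    by_contra hMjk
    rw [hAbeq j, hAbeq k] at hMjk
    obtain ⟨X, Y, hXY, h1, h2⟩ := exists_pair_of_not_isUnit_Mjk hMjk
    exact not_uniquelyBD_of_pair hjk A W hW hXY h1 h2 hU
  · intro hM
    have hM' : ∀ j k : Fin t, j < k →
        IsUnit (Mjk (fun i => blk (Wᵀ * A i * W) j j) (fun i => blk (Wᵀ * A i * W) k k)) := by
      intro j k hjk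
      have := hM j k hjk
      rwa [hAbeq j, hAbeq k] at this
    have hnosplit' : ∀ j, ¬ CanSplit (fun i => blk (Wᵀ * A i * W) j j) := by
      intro j
      have := hnosplit j
      rwa [hAbeq j] at this
    refine ⟨⟨W, hW⟩, ?_⟩
    have hmain : ∀ W₁, IsDiagonalizer A W₁ → ∃ D P : Matrix (BlkIdx n) (BlkIdx n) ℝ,
        IsBlockDiag D ∧ IsUnit D ∧ IsBDPerm P ∧ W₁ = W * (D * P) := by
      intro W₁ hW₁
      obtain ⟨uW, huW⟩ := hW.1
      set U : Matrix (BlkIdx n) (BlkIdx n) ℝ := (↑uW⁻¹ : Matrix (BlkIdx n) (BlkIdx n) ℝ) * W₁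
        with hUdef
      have hWinv : W * (↑uW⁻¹ : Matrix (BlkIdx n) (BlkIdx n) ℝ) = 1 := by
        rw [← huW]; exact uW.mul_inv
      have hWU : W * U = W₁ := by
        rw [hUdef, ← Matrix.mul_assoc, hWinv, Matrix.one_mul]
      have hUu : IsUnit U := (Units.isUnit uW⁻¹).mul hW₁.1
      have hCd : ∀ i, IsBlockDiag (Uᵀ * (Wᵀ * A i * W) * U) := by
        intro i
        have hTW : (↑uW⁻¹ : Matrix (BlkIdx n) (BlkIdx n) ℝ)ᵀ * Wᵀ = 1 := by
          rw [← Matrix.transpose_mul, hWinv, Matrix.transpose_one]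
        have heq : Uᵀ * (Wᵀ * A i * W) * U = W₁ᵀ * A i * W₁ := by
          rw [hUdef, Matrix.transpose_mul]
          simp only [Matrix.mul_assoc]
          rw [← Matrix.mul_assoc W (↑uW⁻¹ : Matrix (BlkIdx n) (BlkIdx n) ℝ) W₁, hWinv,
            Matrix.one_mul,
            ← Matrix.mul_assoc ((↑uW⁻¹ : Matrix (BlkIdx n) (BlkIdx n) ℝ)ᵀ) Wᵀ (A i * W₁),
            hTW, Matrix.one_mul]
        rw [heq]
        exact hW₁.2 i
      obtain ⟨D, P, hDbd, hDu, hPbd, hUDP⟩ :=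
        diagonalizer_eq_DP hn (fun i => Wᵀ * A i * W) (fun i => hW.2 i) hM' hnosplit'
          U hUu hCd
      exact ⟨D, P, hDbd, hDu, hPbd, by rw [← hWU, hUDP]⟩
    intro W₁ W₂ hW₁ hW₂
    obtain ⟨D₁, P₁, hD₁bd, hD₁u, hP₁, hW₁e⟩ := hmain W₁ hW₁
    obtain ⟨D₂, P₂, hD₂bd, hD₂u, hP₂, hW₂e⟩ := hmain W₂ hW₂
    obtain ⟨u₁, hu₁⟩ := hD₁u
    have hD₁inv_bd : IsBlockDiag (↑u₁⁻¹ : Matrix (BlkIdx n) (BlkIdx n) ℝ) :=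
      isBlockDiag_unit_inv (by rw [hu₁]; exact hD₁bd)
    set X : Matrix (BlkIdx n) (BlkIdx n) ℝ := (↑u₁⁻¹ : Matrix (BlkIdx n) (BlkIdx n) ℝ) * D₂
      with hXdef
    have hXbd : IsBlockDiag X := isBlockDiag_mul hD₁inv_bd hD₂bd
    have hXu : IsUnit X := (Units.isUnit u₁⁻¹).mul hD₂u
    obtain ⟨σ₁, hσ₁⟩ := hP₁.1
    have hP₁u : IsUnit P₁ := by rw [hσ₁]; exact isUnit_permMatrix σ₁
    have hP₁Tu : IsUnit P₁ᵀ := by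
      rw [hσ₁, transpose_permMatrix]
      exact isUnit_permMatrix σ₁.symm
    have hPP : ∀ Z : Matrix (BlkIdx n) (BlkIdx n) ℝ, P₁ * (P₁ᵀ * Z) = Z := by
      intro Z
      rw [← Matrix.mul_assoc, hσ₁, permMatrix_mul_transpose_self, Matrix.one_mul]
    have hDX : D₁ * X = D₂ := by
      rw [hXdef, ← Matrix.mul_assoc]
      have h1 : D₁ * (↑u₁⁻¹ : Matrix (BlkIdx n) (BlkIdx n) ℝ) = 1 := by
        rw [← hu₁]; exact u₁.mul_inv
      rw [h1, Matrix.one_mul]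
    refine ⟨P₁ᵀ * X * P₁, P₁ᵀ * P₂, hP₁.2 X hXbd, (hP₁Tu.mul hXu).mul hP₁u,
      isBDPerm_mul (isBDPerm_transpose hn hP₁) hP₂, ?_⟩
    calc W₂ = W * (D₂ * P₂) := hW₂e
      _ = W * (D₁ * (X * P₂)) := by rw [← hDX, Matrix.mul_assoc]
      _ = W * (D₁ * (P₁ * (P₁ᵀ * (X * (P₁ * (P₁ᵀ * P₂)))))) := by
          rw [hPP P₂, hPP (X * P₂)]
      _ = W₁ * (P₁ᵀ * X * P₁) * (P₁ᵀ * P₂) := by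
          rw [hW₁e]
          simp only [Matrix.mul_assoc]

end JBD
end

section
/- Let A_i = [[α_i, β_i],[β_i, −α_i]] ∈ ℝ^{2×2} for i = 1,…,m, where all α_i, β_i are nonzero real numbers and the ratios α_i/β_i are not all equal. Then 𝒜 = {A_i}_{i=1}^m cannot be simultaneously diagonalized by congruence (there is no nonsingular W ∈ ℝ^{2×2} with all Wᵀ A_i W diagonal), and 𝒩(𝒜) = span{I_2, [[0,1],[−1,0]]}; in particular dim 𝒩(𝒜) = 2. -/
open Matrix BigOperators Kronecker
open scoped ENNReal

namespace JBD

variable {t : ℕ} {n : Fin t → ℕ}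

private lemma solve2 {a b c d x y : ℝ} (hdet : a * d - c * b ≠ 0)
    (h1 : a * x + b * y = 0) (h2 : c * x + d * y = 0) : x = 0 ∧ y = 0 := by
  constructor
  · have h : x * (a * d - c * b) = d * (a * x + b * y) - b * (c * x + d * y) := by ring
    rw [h1, h2] at h
    simp only [mul_zero, sub_zero] at h
    rcases mul_eq_zero.mp h with h | h
    · exact h
    · exact absurd h hdet
  · have h : y * (a * d - c * b) = a * (c * x + d * y) - c * (a * x + b * y) := by ring
    rw [h1, h2] at h
    simp only [mul_zero, sub_zero] at h
    rcases mul_eq_zero.mp h with h | h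
    · exact h
    · exact absurd h hdet

private lemma mem_nSubmodule {m : ℕ} {I : Type*} [Fintype I] (B : Fin m → Matrix I I ℝ)
    (Z : Matrix I I ℝ) : Z ∈ nSubmodule B ↔ ∀ i, B i * Z - Zᵀ * B i = 0 := Iff.rfl


/-- the family `A_i = [[α_i, β_i],[β_i, -α_i]]` with nonzero entries and
non-constant ratios `α_i/β_i` cannot be simultaneously diagonalized by congruence, and
`𝒩(𝒜) = span{I₂, [[0,1],[-1,0]]}`, which has dimension 2. -/
theorem nSubmodule_two_dim_example {m : ℕ} (α β : Fin m → ℝ)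
    (hα : ∀ i, α i ≠ 0) (hβ : ∀ i, β i ≠ 0)
    (hratio : ∃ i i', α i / β i ≠ α i' / β i')
    (A : Fin m → Matrix (Fin 2) (Fin 2) ℝ)
    (hA : ∀ i, A i = !![α i, β i; β i, -α i]) :
    (¬ ∃ W : Matrix (Fin 2) (Fin 2) ℝ, IsUnit W ∧ ∀ i, (Wᵀ * A i * W).IsDiag) ∧
    nSubmodule A =
      Submodule.span ℝ {(1 : Matrix (Fin 2) (Fin 2) ℝ), !![0, 1; -1, 0]} ∧
    Module.finrank ℝ (nSubmodule A) = 2 := by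
  obtain ⟨i, i', hii⟩ := hratio
  have hdet : α i * β i' - α i' * β i ≠ 0 := by
    intro h
    apply hii
    rw [div_eq_div_iff (hβ i) (hβ i')]
    linarith
  have hspan : nSubmodule A =
      Submodule.span ℝ {(1 : Matrix (Fin 2) (Fin 2) ℝ), !![0, 1; -1, 0]} := by
    apply le_antisymm
    · intro Z hZ
      rw [mem_nSubmodule] at hZ
      have key : ∀ k, α k * (Z 0 1 + Z 1 0) + β k * (Z 1 1 - Z 0 0) = 0 := by
        intro k
        have h01 := congrFun (congrFun (hZ k) 0) 1
        simp [hA k, Matrix.mul_apply, Matrix.vecMul, dotProduct,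
          Fin.sum_univ_two, Matrix.sub_apply, Matrix.transpose_apply] at h01
        linarith
      obtain ⟨hs, hu⟩ := solve2 hdet (key i) (key i')
      have hZeq : Z = Z 0 0 • (1 : Matrix (Fin 2) (Fin 2) ℝ) + Z 0 1 • !![0, 1; -1, 0] := by
        ext r c
        fin_cases r <;> fin_cases c <;>
          simp [Matrix.one_apply, Matrix.add_apply, Matrix.smul_apply] <;> linarith
      rw [hZeq]
      exact Submodule.add_mem _
        (Submodule.smul_mem _ _ (Submodule.subset_span (Set.mem_insert _ _)))
        (Submodule.smul_mem _ _ (Submodule.subset_span (Set.mem_insert_of_mem _ rfl)))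
    · rw [Submodule.span_le]
      intro Z hZ
      simp only [Set.mem_insert_iff, Set.mem_singleton_iff] at hZ
      rcases hZ with rfl | rfl
      · rw [SetLike.mem_coe, mem_nSubmodule]
        intro k
        simp [Matrix.transpose_one]
      · rw [SetLike.mem_coe, mem_nSubmodule]
        intro k
        have hJT : (!![0, (1:ℝ); -1, 0])ᵀ = !![0, -1; 1, 0] := by
          ext r c
          fin_cases r <;> fin_cases c <;> simp
        rw [hA k, hJT]
        ext r c
        fin_cases r <;> fin_cases c <;>
          simp [Matrix.mul_apply, Fin.sum_univ_two] <;> ring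
  refine ⟨?_, hspan, ?_⟩
  · rintro ⟨W, hW, hd⟩
    have hdW : W.det ≠ 0 :=
      isUnit_iff_ne_zero.mp ((Matrix.isUnit_iff_isUnit_det W).mp hW)
    set a := W 0 0 with ha
    set b := W 1 0 with hb
    set c := W 0 1 with hc
    set d := W 1 1 with hd'
    have key : ∀ k, α k * (a * c - b * d) + β k * (a * d + b * c) = 0 := by
      intro k
      have h := hd k (show (0 : Fin 2) ≠ 1 by decide)
      simp [hA k, Matrix.mul_apply, Fin.sum_univ_two, Matrix.transpose_apply,
        ← ha, ← hb, ← hc, ← hd'] at h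
      linarith
    obtain ⟨hs, hu⟩ := solve2 hdet (key i) (key i')
    have hWdet : W.det = a * d - c * b := by rw [Matrix.det_fin_two]
    have hiden : (a * d - c * b) ^ 2 + (a * c + b * d) ^ 2
        = (a * c - b * d) ^ 2 + (a * d + b * c) ^ 2 := by ring
    rw [hs, hu] at hiden
    have hd0 : a * d - c * b = 0 := by nlinarith [sq_nonneg (a * d - c * b), sq_nonneg (a * c + b * d)]
    exact hdW (hWdet.trans hd0)
  · have h1J : LinearIndependent ℝ ![(1 : Matrix (Fin 2) (Fin 2) ℝ), !![0, 1; -1, 0]] := by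
      rw [LinearIndependent.pair_iff]
      intro s t hst
      have h00 := congrFun (congrFun hst 0) 0
      have h01 := congrFun (congrFun hst 0) 1
      simp [Matrix.one_apply, Matrix.add_apply, Matrix.smul_apply] at h00 h01
      exact ⟨h00, h01⟩
    have hset : ({(1 : Matrix (Fin 2) (Fin 2) ℝ), !![0, 1; -1, 0]} : Set _)
        = Set.range ![(1 : Matrix (Fin 2) (Fin 2) ℝ), !![0, 1; -1, 0]] := by
      ext x
      simp only [Set.mem_insert_iff, Set.mem_singleton_iff, Set.mem_range,
        Fin.exists_fin_two, Matrix.cons_val_zero, Matrix.cons_val_one, Matrix.head_cons]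
      tauto
    rw [hspan, hset, finrank_span_eq_card h1J, Fintype.card_fin]


end JBD
end
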